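/- arXiv:2108.12025 — 11 statements merged into one kernel-verified Lean document; each statement's English description precedes it below -/
import Mathlib

section
/- Let u_P, u_I : ℝ≥0 → ℝ be twice continuously differentiable, strictly decreasing functions with u_P''(x)/u_P'(x) > u_I''(x)/u_I'(x) for all x ≥ 0. Then for any α ∈ (0,1), the function g(x) = α·u_P(x) − (1−α)·u_I(x) is strictly quasi-concave on ℝ≥0: for all x' < x'' and λ ∈ (0,1), g(λx' + (1−λ)x'') > min(g(x'), g(x'')). -/
open Set

open Filter in
private lemma neg_deriv_right' {f : ℝ → ℝ} {f' c : ℝ} (hf : HasDerivAt f f' c) (h : f' < 0) :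
    ∀ᶠ x in nhdsWithin c (Set.Ioi c), f x < f c := by
  have hs := hasDerivAt_iff_tendsto_slope.1 hf
  have h1 : ∀ᶠ x in nhdsWithin c {c}ᶜ, slope f c x < 0 := hs.eventually_lt_const h
  have h2 : ∀ᶠ x in nhdsWithin c (Set.Ioi c), slope f c x < 0 :=
    h1.filter_mono (nhdsWithin_mono c (fun x hx => ne_of_gt hx))
  filter_upwards [h2, eventually_mem_nhdsWithin] with x hx hmem
  rw [slope_def_field, div_neg_iff] at hx
  rcases hx with ⟨_, h3⟩ | ⟨h3, _⟩
  · linarith [Set.mem_Ioi.1 hmem]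
  · linarith

open Filter in
private lemma pos_deriv_left' {f : ℝ → ℝ} {f' c : ℝ} (hf : HasDerivAt f f' c) (h : f' < 0) :
    ∀ᶠ x in nhdsWithin c (Set.Iio c), f c < f x := by
  have hs := hasDerivAt_iff_tendsto_slope.1 hf
  have h1 : ∀ᶠ x in nhdsWithin c {c}ᶜ, slope f c x < 0 := hs.eventually_lt_const h
  have h2 : ∀ᶠ x in nhdsWithin c (Set.Iio c), slope f c x < 0 :=
    h1.filter_mono (nhdsWithin_mono c (fun x hx => ne_of_lt hx))
  filter_upwards [h2, eventually_mem_nhdsWithin] with x hx hmem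
  rw [slope_def_field, div_neg_iff] at hx
  rcases hx with ⟨h3, _⟩ | ⟨_, h3⟩
  · linarith
  · linarith [Set.mem_Iio.1 hmem]

/-- Lemma 1 of the paper. Under the absolute-risk-aversion ordering,
the weighted utility difference `g = α·u_P − (1−α)·u_I` is strictly quasi-concave on `ℝ≥0`. -/
theorem stmt0 (uP uI : ℝ → ℝ)
    (hP2 : ContDiff ℝ 2 uP) (hI2 : ContDiff ℝ 2 uI)
    (hPanti : StrictAntiOn uP (Ici 0)) (hIanti : StrictAntiOn uI (Ici 0))
    (hPder : ∀ x : ℝ, 0 ≤ x → deriv uP x < 0)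
    (hIder : ∀ x : ℝ, 0 ≤ x → deriv uI x < 0)
    (hcurv : ∀ x : ℝ, 0 ≤ x →
      deriv (deriv uI) x / deriv uI x < deriv (deriv uP) x / deriv uP x)
    (α : ℝ) (hα : α ∈ Ioo (0:ℝ) 1) :
    ∀ x' x'' : ℝ, 0 ≤ x' → x' < x'' → ∀ l ∈ Ioo (0:ℝ) 1,
      min (α * uP x' - (1 - α) * uI x') (α * uP x'' - (1 - α) * uI x'')
        < α * uP (l * x' + (1 - l) * x'') - (1 - α) * uI (l * x' + (1 - l) * x'') := by
  obtain ⟨hα0, hα1⟩ := hα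
  set g : ℝ → ℝ := fun x => α * uP x - (1 - α) * uI x with hg
  have hP1 : Differentiable ℝ uP := hP2.differentiable (by norm_num)
  have hI1 : Differentiable ℝ uI := hI2.differentiable (by norm_num)
  have hPd1 : ContDiff ℝ 1 (deriv uP) :=
    ((contDiff_succ_iff_deriv (n := 1)).1 (by exact_mod_cast hP2)).2.2
  have hId1 : ContDiff ℝ 1 (deriv uI) :=
    ((contDiff_succ_iff_deriv (n := 1)).1 (by exact_mod_cast hI2)).2.2
  have hPd : Differentiable ℝ (deriv uP) := hPd1.differentiable (by norm_num)
  have hId : Differentiable ℝ (deriv uI) := hId1.differentiable (by norm_num)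
  have hgd : Differentiable ℝ g := (hP1.const_mul α).sub (hI1.const_mul (1 - α))
  have hg' : ∀ x, deriv g x = α * deriv uP x - (1 - α) * deriv uI x := by
    intro x
    rw [hg, deriv_fun_sub ((hP1 x).const_mul α) ((hI1 x).const_mul (1 - α)),
      deriv_const_mul α (hP1 x), deriv_const_mul (1 - α) (hI1 x)]
  have hg'fun : deriv g = fun x => α * deriv uP x - (1 - α) * deriv uI x := funext hg'
  have hg'd : Differentiable ℝ (deriv g) := by
    rw [hg'fun]; exact (hPd.const_mul α).sub (hId.const_mul (1 - α))
  have hg'c : Continuous (deriv g) := hg'd.continuous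
  have hg'' : ∀ x, deriv (deriv g) x = α * deriv (deriv uP) x - (1 - α) * deriv (deriv uI) x := by
    intro x
    rw [hg'fun, deriv_fun_sub ((hPd x).const_mul α) ((hId x).const_mul (1 - α)),
      deriv_const_mul α (hPd x), deriv_const_mul (1 - α) (hId x)]
  -- key: at any nonneg zero of g', g'' < 0
  have key : ∀ x, 0 ≤ x → deriv g x = 0 → deriv (deriv g) x < 0 := by
    intro x hx h0
    rw [hg'']
    rw [hg'] at h0
    have hp := hPder x hx
    have hq := hIder x hx
    have hc := hcurv x hx
    set p := deriv uP x
    set q := deriv uI x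
    set P2 := deriv (deriv uP) x
    set Q2 := deriv (deriv uI) x
    have hpq : 0 < p * q := mul_pos_of_neg_of_neg hp hq
    have hp' : p ≠ 0 := ne_of_lt hp
    have hq' : q ≠ 0 := ne_of_lt hq
    have h2 := mul_lt_mul_of_pos_right hc hpq
    have e1 : Q2 / q * (p * q) = Q2 * p := by field_simp
    have e2 : P2 / p * (p * q) = P2 * q := by field_simp
    rw [e1, e2] at h2
    have h4 : α * (Q2 * p) < α * (P2 * q) := mul_lt_mul_of_pos_left h2 hα0
    have h0' : α * p = (1 - α) * q := by linarith
    have h5 : Q2 * (α * p) = Q2 * ((1 - α) * q) := by rw [h0']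
    nlinarith [h4, h5, hq]
  -- crossing lemma: once g' ≤ 0 it stays < 0
  have cross : ∀ a b : ℝ, 0 ≤ a → a < b → deriv g a ≤ 0 → deriv g b < 0 := by
    intro a b ha hab hga
    by_contra hb
    push_neg at hb
    have hright : ∀ᶠ x in nhdsWithin a (Ioi a), deriv g x < 0 := by
      rcases lt_or_eq_of_le hga with h | h
      · exact ((hg'c.tendsto a).eventually_lt_const h).filter_mono nhdsWithin_le_nhds
      · have hk := key a ha h
        have h2 := neg_deriv_right' ((hg'd a).hasDerivAt) hk
        simpa [h] using h2
    have hmem : {x | deriv g x < 0} ∈ nhdsWithin a (Ioi a) := hright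
    rw [mem_nhdsGT_iff_exists_Ioo_subset] at hmem
    obtain ⟨d, hd, hsub⟩ := hmem
    rw [mem_Ioi] at hd
    set S : Set ℝ := {x | x ∈ Ioc a b ∧ 0 ≤ deriv g x} with hS
    have hbS : b ∈ S := ⟨⟨hab, le_rfl⟩, hb⟩
    have hSne : S.Nonempty := ⟨b, hbS⟩
    have hSbdd : BddBelow S := ⟨a, fun x hx => le_of_lt hx.1.1⟩
    set c := sInf S with hc
    have hcb : c ≤ b := csInf_le hSbdd hbS
    have hlbd : ∀ x ∈ S, min d b ≤ x := by
      intro x hx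
      rcases le_or_gt d x with h | h
      · exact le_trans (min_le_left _ _) h
      · exfalso
        have : x ∈ Ioo a d := ⟨hx.1.1, h⟩
        exact absurd hx.2 (not_le.2 (hsub this))
    have hca : a < c := lt_of_lt_of_le (lt_min hd hab) (le_csInf hSne hlbd)
    have hgc0 : 0 ≤ deriv g c := by
      have hcl : c ∈ closure S := csInf_mem_closure hSne hSbdd
      have : closure S ⊆ {x | 0 ≤ deriv g x} := by
        apply closure_minimal (fun x hx => hx.2)
        exact isClosed_le continuous_const hg'c
      exact this hcl
    have hneg : ∀ x ∈ Ioo a c, deriv g x < 0 := by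
      intro x hx
      by_contra hxx
      push_neg at hxx
      have hxS : x ∈ S := ⟨⟨hx.1, le_trans (le_of_lt hx.2) hcb⟩, hxx⟩
      exact absurd (csInf_le hSbdd hxS) (not_le.2 hx.2)
    have hIoo : Ioo a c ∈ nhdsWithin c (Iio c) :=
      Ioo_mem_nhdsLT_of_mem ⟨hca, le_rfl⟩
    have hposleft : ∀ᶠ x in nhdsWithin c (Iio c), 0 < deriv g x := by
      rcases lt_or_eq_of_le hgc0 with h | h
      · exact ((hg'c.tendsto c).eventually_const_lt h).filter_mono nhdsWithin_le_nhds
      · have hk := key c (le_of_lt (lt_of_le_of_lt ha hca)) h.symm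
        have h2 := pos_deriv_left' ((hg'd c).hasDerivAt) hk
        simpa [← h] using h2
    have : ∀ᶠ x in nhdsWithin c (Iio c), False := by
      filter_upwards [hposleft, Filter.eventually_of_mem hIoo (fun x hx => hx)] with x h1 h2
      exact absurd h1 (not_lt.2 (le_of_lt (hneg x h2)))
    rcases this.exists with ⟨x, hx⟩
    exact hx
  -- main argument via MVT
  intro x' x'' hx' hxx l hl
  obtain ⟨hl0, hl1⟩ := hl
  set z := l * x' + (1 - l) * x'' with hz
  have hz1 : x' < z := by rw [hz]; nlinarith
  have hz2 : z < x'' := by rw [hz]; nlinarith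
  show min (g x') (g x'') < g z
  obtain ⟨c1, hc1, hc1e⟩ := exists_deriv_eq_slope g hz1
    (hgd.continuous.continuousOn) (hgd.differentiableOn)
  rcases lt_or_ge 0 (deriv g c1) with h | h
  · -- g increasing somewhere on (x', z): g x' < g z
    have hpos : 0 < (g z - g x') / (z - x') := by rw [← hc1e]; exact h
    have : 0 < g z - g x' := by
      have := mul_pos hpos (sub_pos.2 hz1)
      rwa [div_mul_cancel₀ _ (ne_of_gt (sub_pos.2 hz1))] at this
    calc min (g x') (g x'') ≤ g x' := min_le_left _ _
      _ < g z := by linarith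
  · obtain ⟨c2, hc2, hc2e⟩ := exists_deriv_eq_slope g hz2
      (hgd.continuous.continuousOn) (hgd.differentiableOn)
    have hc1pos : 0 ≤ c1 := le_of_lt (lt_of_le_of_lt hx' hc1.1)
    have hneg2 : deriv g c2 < 0 := cross c1 c2 hc1pos (lt_trans hc1.2 hc2.1) h
    have hneg3 : (g x'' - g z) / (x'' - z) < 0 := by rw [← hc2e]; exact hneg2
    have : g x'' - g z < 0 := by
      have := mul_neg_of_neg_of_pos hneg3 (sub_pos.2 hz2)
      rwa [div_mul_cancel₀ _ (ne_of_gt (sub_pos.2 hz2))] at this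
    calc min (g x') (g x'') ≤ g x'' := min_le_right _ _
      _ < g z := by linarith
end

section
/- Let g : [0, X̄] → ℝ be continuous and strictly quasi-concave, with X̄ > 0. Suppose x_I, x_P ∈ (0, X̄) satisfy g(x_I) ≤ g(X̄) (case 1) or g(x_P) ≤ g(0) (case 2). Then these two cases cannot hold simultaneously when x_P < x_I: if g(x_P) ≤ g(0), then g(x_I) > g(X̄). -/
open Set

/-- for a continuous strictly quasi-concave `g` on `[0, X̄]`,
the cases `g(x_P) ≤ g(0)` (PI) and `g(x_I) ≤ g(X̄)` (IP) are mutually exclusive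
when `x_P < x_I` lie in the interior: if `g(x_P) ≤ g(0)` then `g(x_I) > g(X̄)`. -/
theorem stmt2 (Xb : ℝ) (hXb : 0 < Xb) (g : ℝ → ℝ)
    (hg : ContinuousOn g (Icc 0 Xb))
    (hqc : ∀ a ∈ Icc (0:ℝ) Xb, ∀ b ∈ Icc (0:ℝ) Xb, a ≠ b → ∀ l ∈ Ioo (0:ℝ) 1,
      min (g a) (g b) < g (l * a + (1 - l) * b))
    (xI xP : ℝ) (hxI : xI ∈ Ioo 0 Xb) (hxP : xP ∈ Ioo 0 Xb) (hlt : xP < xI)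
    (hcase2 : g xP ≤ g 0) :
    g Xb < g xI := by
  obtain ⟨hI0, hIX⟩ := hxI
  obtain ⟨hP0, hPX⟩ := hxP
  -- Step 1: xP is a convex combination of xI and 0, so g xI < g xP
  have h1 : min (g xI) (g 0) < g xP := by
    have hl : xP / xI ∈ Ioo (0:ℝ) 1 := ⟨div_pos hP0 (hP0.trans hlt), (div_lt_one (hP0.trans hlt)).2 hlt⟩
    have := hqc xI ⟨le_of_lt hI0, le_of_lt hIX⟩ 0 ⟨le_refl _, le_of_lt hXb⟩
      (by positivity) (xP / xI) hl
    have heq : xP / xI * xI + (1 - xP / xI) * 0 = xP := by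
      field_simp
      ring
    rwa [heq] at this
  have hIP : g xI < g xP := by
    rcases min_lt_iff.mp h1 with h | h
    · exact h
    · exact absurd (h.trans_le hcase2) (lt_irrefl _)
  -- Step 2: xI is a convex combination of xP and Xb
  have hl2 : (Xb - xI) / (Xb - xP) ∈ Ioo (0:ℝ) 1 := by
    constructor
    · exact div_pos (by linarith) (by linarith)
    · rw [div_lt_one (by linarith)]; linarith
  have h2 := hqc xP ⟨le_of_lt hP0, le_of_lt hPX⟩ Xb ⟨le_of_lt hXb, le_refl _⟩
    (by linarith) ((Xb - xI) / (Xb - xP)) hl2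
  have heq2 : (Xb - xI) / (Xb - xP) * xP + (1 - (Xb - xI) / (Xb - xP)) * Xb = xI := by
    have hne : Xb - xP ≠ 0 := by linarith
    field_simp
    ring
  rw [heq2] at h2
  rcases min_lt_iff.mp h2 with h | h
  · linarith
  · exact h
end

section
/- Let u_P, u_I be strictly decreasing, twice continuously differentiable functions on ℝ≥0 with u_P''(x)/u_P'(x) > u_I''(x)/u_I'(x) for all x. Let x₂ : [0, x̄] → ℝ be a differentiable, strictly increasing function with x₂(x₁) > x₁ for all x₁. Fix x₂(x₁) = F⁻¹(F(x₁) + μ_P) for a strictly increasing continuously differentiable CDF F so that x₂'(x₁) = f(x₁)/f(x₂(x₁)). Then γ(x₁) = (u_P(x₁) − u_P(x₂(x₁))) / (u_I(x₁) − u_I(x₂(x₁))) is strictly increasing in x₁. -/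
open Set

private lemma divaux1 (A q p : ℝ) (hq : q ≠ 0) : A / q * (q * p) = A * p := by
  field_simp

private lemma divaux2 (A q p : ℝ) (hq : q ≠ 0) : A / q * (p * q) = A * p := by
  field_simp

private lemma derivC1 {f : ℝ → ℝ} (h : ContDiff ℝ 2 f) : ContDiff ℝ 1 (deriv f) := by
  have h' : ContDiff ℝ ((1:ℕ∞) + 1) f := by exact_mod_cast h
  rw [contDiff_succ_iff_deriv] at h'
  exact h'.2.2

/-- r = uP'/uI' gives the cross-product inequality: for 0 ≤ a < b,
uP'(a)·uI'(b) < uP'(b)·uI'(a). -/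
private lemma rmono (uP uI : ℝ → ℝ)
    (hP2 : ContDiff ℝ 2 uP) (hI2 : ContDiff ℝ 2 uI)
    (hPder : ∀ x : ℝ, 0 ≤ x → deriv uP x < 0)
    (hIder : ∀ x : ℝ, 0 ≤ x → deriv uI x < 0)
    (hcurv : ∀ x : ℝ, 0 ≤ x →
      deriv (deriv uI) x / deriv uI x < deriv (deriv uP) x / deriv uP x) :
    ∀ a b : ℝ, 0 ≤ a → a < b → deriv uP a * deriv uI b < deriv uP b * deriv uI a := by
  have hPd1 := derivC1 hP2
  have hId1 := derivC1 hI2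
  have hr : StrictMonoOn (fun x => deriv uP x / deriv uI x) (Ici 0) := by
    apply strictMonoOn_of_deriv_pos (convex_Ici 0)
    · exact (hPd1.continuous.continuousOn).div (hId1.continuous.continuousOn)
        (fun x hx => (hIder x hx).ne)
    · intro x hx
      rw [interior_Ici] at hx
      have hx0 : (0:ℝ) ≤ x := le_of_lt hx
      have hIne : deriv uI x ≠ 0 := (hIder x hx0).ne
      have hd : HasDerivAt (fun x => deriv uP x / deriv uI x)
          ((deriv (deriv uP) x * deriv uI x - deriv uP x * deriv (deriv uI) x)
            / (deriv uI x)^2) x :=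
        ((hPd1.differentiable one_ne_zero x).hasDerivAt).div
          ((hId1.differentiable one_ne_zero x).hasDerivAt) hIne
      rw [hd.deriv]
      apply div_pos _ (by positivity)
      have hc := hcurv x hx0
      have hPne : deriv uP x ≠ 0 := (hPder x hx0).ne
      have hmul : deriv (deriv uI) x / deriv uI x * (deriv uI x * deriv uP x)
          < deriv (deriv uP) x / deriv uP x * (deriv uI x * deriv uP x) :=
        mul_lt_mul_of_pos_right hc (mul_pos_of_neg_of_neg (hIder x hx0) (hPder x hx0))
      have e1 : deriv (deriv uI) x / deriv uI x * (deriv uI x * deriv uP x)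
          = deriv (deriv uI) x * deriv uP x := divaux1 _ _ _ hIne
      have e2 : deriv (deriv uP) x / deriv uP x * (deriv uI x * deriv uP x)
          = deriv (deriv uP) x * deriv uI x := by
        rw [mul_comm (deriv uI x) (deriv uP x)]; exact divaux1 _ _ _ hPne
      rw [e1, e2] at hmul
      linarith
  intro a b ha hab
  have h := hr (mem_Ici.mpr ha) (mem_Ici.mpr (ha.trans hab.le)) hab
  have hIa := hIder a ha
  have hIb := hIder b (ha.trans hab.le)
  have hmul : deriv uP a / deriv uI a * (deriv uI a * deriv uI b)
      < deriv uP b / deriv uI b * (deriv uI a * deriv uI b) :=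
    mul_lt_mul_of_pos_right h (mul_pos_of_neg_of_neg hIa hIb)
  have e1 : deriv uP a / deriv uI a * (deriv uI a * deriv uI b)
      = deriv uP a * deriv uI b := divaux1 _ _ _ hIa.ne
  have e2 : deriv uP b / deriv uI b * (deriv uI a * deriv uI b)
      = deriv uP b * deriv uI a := divaux2 _ _ _ hIb.ne
  rw [e1, e2] at hmul
  linarith

private lemma keyA (uP uI : ℝ → ℝ)
    (hP2 : ContDiff ℝ 2 uP) (hI2 : ContDiff ℝ 2 uI)
    (hPder : ∀ x : ℝ, 0 ≤ x → deriv uP x < 0)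
    (hIder : ∀ x : ℝ, 0 ≤ x → deriv uI x < 0)
    (hcurv : ∀ x : ℝ, 0 ≤ x →
      deriv (deriv uI) x / deriv uI x < deriv (deriv uP) x / deriv uP x) :
    ∀ a b : ℝ, 0 ≤ a → a < b →
      deriv uI a * (uP a - uP b) < deriv uP a * (uI a - uI b) := by
  intro a b ha hab
  have hP1 : Differentiable ℝ uP := hP2.differentiable (by norm_num)
  have hI1 : Differentiable ℝ uI := hI2.differentiable (by norm_num)
  have hg : StrictAntiOn
      (fun t => deriv uI a * (uP a - uP t) - deriv uP a * (uI a - uI t)) (Ici a) := by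
    apply strictAntiOn_of_deriv_neg (convex_Ici a)
    · exact (continuousOn_const.mul (continuousOn_const.sub hP1.continuous.continuousOn)).sub
        (continuousOn_const.mul (continuousOn_const.sub hI1.continuous.continuousOn))
    · intro t ht
      rw [interior_Ici] at ht
      have ht0 : (0:ℝ) ≤ t := ha.trans ht.le
      have hd : HasDerivAt
          (fun t => deriv uI a * (uP a - uP t) - deriv uP a * (uI a - uI t))
          (deriv uI a * (0 - deriv uP t) - deriv uP a * (0 - deriv uI t)) t := by
        exact (((hasDerivAt_const t (uP a)).sub (hP1 t).hasDerivAt).const_mul _).sub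
          (((hasDerivAt_const t (uI a)).sub (hI1 t).hasDerivAt).const_mul _)
      rw [hd.deriv]
      have := rmono uP uI hP2 hI2 hPder hIder hcurv a t ha ht
      nlinarith [this]
  have := hg (mem_Ici.mpr le_rfl) (mem_Ici.mpr hab.le) hab
  simp at this
  linarith [this]

private lemma keyB (uP uI : ℝ → ℝ)
    (hP2 : ContDiff ℝ 2 uP) (hI2 : ContDiff ℝ 2 uI)
    (hPder : ∀ x : ℝ, 0 ≤ x → deriv uP x < 0)
    (hIder : ∀ x : ℝ, 0 ≤ x → deriv uI x < 0)
    (hcurv : ∀ x : ℝ, 0 ≤ x →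
      deriv (deriv uI) x / deriv uI x < deriv (deriv uP) x / deriv uP x) :
    ∀ a b : ℝ, 0 ≤ a → a < b →
      deriv uP b * (uI a - uI b) < deriv uI b * (uP a - uP b) := by
  intro a b ha hab
  have hP1 : Differentiable ℝ uP := hP2.differentiable (by norm_num)
  have hI1 : Differentiable ℝ uI := hI2.differentiable (by norm_num)
  have hg : StrictAntiOn
      (fun t => deriv uI b * (uP t - uP b) - deriv uP b * (uI t - uI b)) (Icc 0 b) := by
    apply strictAntiOn_of_deriv_neg (convex_Icc 0 b)
    · exact (continuousOn_const.mul (hP1.continuous.continuousOn.sub continuousOn_const)).sub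
        (continuousOn_const.mul (hI1.continuous.continuousOn.sub continuousOn_const))
    · intro t ht
      rw [interior_Icc] at ht
      have hd : HasDerivAt
          (fun t => deriv uI b * (uP t - uP b) - deriv uP b * (uI t - uI b))
          (deriv uI b * (deriv uP t - 0) - deriv uP b * (deriv uI t - 0)) t := by
        exact ((((hP1 t).hasDerivAt).sub (hasDerivAt_const t (uP b))).const_mul _).sub
          ((((hI1 t).hasDerivAt).sub (hasDerivAt_const t (uI b))).const_mul _)
      rw [hd.deriv]
      have := rmono uP uI hP2 hI2 hPder hIder hcurv t b ht.1.le ht.2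
      nlinarith [this]
  have := hg (mem_Icc.mpr ⟨ha, hab.le⟩) (mem_Icc.mpr ⟨ha.trans hab.le, le_rfl⟩) hab
  simp at this
  linarith [this]


/-- with `x₂(x₁)` determined by `F(x₂(x₁)) = F(x₁) + μ_P` for a strictly
increasing C¹ CDF `F` with positive density, the ratio
`γ(x₁) = (u_P(x₁) − u_P(x₂(x₁))) / (u_I(x₁) − u_I(x₂(x₁)))` is strictly increasing. -/
theorem stmt4 (uP uI : ℝ → ℝ)
    (hP2 : ContDiff ℝ 2 uP) (hI2 : ContDiff ℝ 2 uI)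
    (hPanti : StrictAntiOn uP (Ici 0)) (hIanti : StrictAntiOn uI (Ici 0))
    (hPder : ∀ x : ℝ, 0 ≤ x → deriv uP x < 0)
    (hIder : ∀ x : ℝ, 0 ≤ x → deriv uI x < 0)
    (hcurv : ∀ x : ℝ, 0 ≤ x →
      deriv (deriv uI) x / deriv uI x < deriv (deriv uP) x / deriv uP x)
    (xbar : ℝ) (hxbar : 0 ≤ xbar)
    (F : ℝ → ℝ) (hF1 : ContDiff ℝ 1 F) (hFder : ∀ x : ℝ, 0 ≤ x → 0 < deriv F x)
    (μP : ℝ) (hμP : 0 < μP)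
    (x₂ : ℝ → ℝ) (hx₂diff : DifferentiableOn ℝ x₂ (Icc 0 xbar))
    (hx₂mono : StrictMonoOn x₂ (Icc 0 xbar))
    (hx₂gt : ∀ x ∈ Icc (0:ℝ) xbar, x < x₂ x)
    (hfeas : ∀ x ∈ Icc (0:ℝ) xbar, F (x₂ x) = F x + μP) :
    StrictMonoOn (fun x => (uP x - uP (x₂ x)) / (uI x - uI (x₂ x))) (Icc 0 xbar) := by
  have hP1 : Differentiable ℝ uP := hP2.differentiable (by norm_num)
  have hI1 : Differentiable ℝ uI := hI2.differentiable (by norm_num)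
  have hDpos : ∀ x ∈ Icc (0:ℝ) xbar, 0 < uI x - uI (x₂ x) := by
    intro x hx
    have h1 : x ∈ Ici (0:ℝ) := hx.1
    have h2 : x₂ x ∈ Ici (0:ℝ) := le_trans hx.1 (hx₂gt x hx).le
    exact sub_pos.mpr (hIanti h1 h2 (hx₂gt x hx))
  apply strictMonoOn_of_deriv_pos (convex_Icc 0 xbar)
  · apply ContinuousOn.div
    · exact (hP1.continuous.continuousOn).sub
        (hP1.continuous.comp_continuousOn hx₂diff.continuousOn)
    · exact (hI1.continuous.continuousOn).sub
        (hI1.continuous.comp_continuousOn hx₂diff.continuousOn)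
    · exact fun x hx => (hDpos x hx).ne'
  · intro x hx
    rw [interior_Icc] at hx
    have hxI : x ∈ Icc (0:ℝ) xbar := ⟨hx.1.le, hx.2.le⟩
    have hmem : Icc (0:ℝ) xbar ∈ nhds x := Icc_mem_nhds hx.1 hx.2
    have hx₂at : DifferentiableAt ℝ x₂ x :=
      (hx₂diff x hxI).differentiableAt hmem
    set y := x₂ x with hy
    set c := deriv x₂ x with hc
    have hcd : HasDerivAt x₂ c x := hx₂at.hasDerivAt
    have hy0 : (0:ℝ) ≤ y := le_trans hx.1.le (hx₂gt x hxI).le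
    -- c > 0 via feasibility
    have hF' : Differentiable ℝ F := hF1.differentiable one_ne_zero
    have h1 : HasDerivAt (F ∘ x₂) (deriv F y * c) x :=
      HasDerivAt.comp x (hF' y).hasDerivAt hcd
    have h2 : HasDerivAt (fun z => F z + μP) (deriv F x) x :=
      ((hF' x).hasDerivAt).add_const μP
    have h1' : HasDerivAt (F ∘ x₂) (deriv F x) x := by
      apply h2.congr_of_eventuallyEq
      exact Filter.eventuallyEq_of_mem hmem (fun z hz => hfeas z hz)
    have heq : deriv F y * c = deriv F x := h1.unique h1'
    have hFx := hFder x hx.1.le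
    have hFy := hFder y hy0
    have hcpos : 0 < c := by
      rcases le_or_gt c 0 with h | h
      · nlinarith
      · exact h
    -- derivative of γ
    have hN : HasDerivAt (fun z => uP z - uP (x₂ z)) (deriv uP x - deriv uP y * c) x :=
      ((hP1 x).hasDerivAt).sub (HasDerivAt.comp x (hP1 y).hasDerivAt hcd)
    have hD : HasDerivAt (fun z => uI z - uI (x₂ z)) (deriv uI x - deriv uI y * c) x :=
      ((hI1 x).hasDerivAt).sub (HasDerivAt.comp x (hI1 y).hasDerivAt hcd)
    have hDp := hDpos x hxI
    have hγ : HasDerivAt (fun z => (uP z - uP (x₂ z)) / (uI z - uI (x₂ z)))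
        (((deriv uP x - deriv uP y * c) * (uI x - uI y)
          - (uP x - uP y) * (deriv uI x - deriv uI y * c)) / (uI x - uI y)^2) x :=
      hN.div hD hDp.ne'
    rw [hγ.deriv]
    apply div_pos _ (by positivity)
    have hA := keyA uP uI hP2 hI2 hPder hIder hcurv x y hx.1.le (hx₂gt x hxI)
    have hB := keyB uP uI hP2 hI2 hPder hIder hcurv x y hx.1.le (hx₂gt x hxI)
    nlinarith [mul_lt_mul_of_pos_left hB hcpos]
end

section
/- Let u_1, ..., u_N : [0,X] → ℝ be strictly decreasing continuous functions such that each pair (u_i, u_j) with i < j satisfies: the difference α u_i − β u_j is strictly quasi-concave for all α, β > 0. Fix constants α_1,...,α_N > 0 and b_1,...,b_N ∈ ℝ, and define v(x) = max_{j} (α_j u_j(x) + b_j). Then for each k, the set {x ∈ [0,X] : α_k u_k(x) + b_k = v(x)} is a union of at most k closed intervals whose complement within conv of the set consists of the 'argmax regions' of more risk-averse types, and η_k(x) = α_k u_k(x) + b_k − max_{j>k}(α_j u_j(x) + b_j) is strictly quasi-concave. -/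
open Set Classical

private theorem filtlen {α : Type*} (l : List α) (p : α → Bool) :
    (l.filter p).length + (l.filter (fun a => !(p a))).length = l.length := by
  induction l with
  | nil => simp
  | cons a t iht => by_cases h : p a <;> simp [List.filter, h] <;> omega

private theorem padlist (p : List (ℝ × ℝ)) (S : Set ℝ) (hS : S = ⋃ q ∈ p, Icc q.1 q.2)
    (n : ℕ) (hn : p.length ≤ n) :
    ∃ p' : List (ℝ × ℝ), p'.length = n ∧ S = ⋃ q ∈ p', Icc q.1 q.2 := by
  refine ⟨p ++ List.replicate (n - p.length) ((1:ℝ), (0:ℝ)), by simp; omega, ?_⟩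
  rw [hS]
  ext x
  simp only [mem_iUnion, List.mem_append, List.mem_replicate]
  constructor
  · rintro ⟨q, hq, hx⟩; exact ⟨q, Or.inl hq, hx⟩
  · rintro ⟨q, hq | ⟨-, rfl⟩, hx⟩
    · exact ⟨q, hq, hx⟩
    · simp at hx

private theorem hull_sub_Icc (T : Set ℝ) (hc : IsCompact T) :
    convexHull ℝ T ⊆ Icc (sInf T) (sSup T) :=
  convexHull_min (fun y hy => ⟨csInf_le hc.bddBelow hy, le_csSup hc.bddAbove hy⟩) (convex_Icc _ _)

private theorem key (n : ℕ) : ∀ (l : List (Set ℝ)) (S : Set ℝ), l.length = n → IsCompact S →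
    (∀ V ∈ l, Convex ℝ V ∧ Disjoint V S) →
    (convexHull ℝ S \ S ⊆ ⋃ V ∈ l, V) →
    ∃ p : List (ℝ × ℝ), p.length = l.length + 1 ∧ S = ⋃ q ∈ p, Icc q.1 q.2 := by
  induction n using Nat.strong_induction_on with
  | _ n ih =>
  intro l S hlen hcomp hVl hcover
  rcases eq_empty_or_nonempty S with hS | hne
  · exact padlist [] S (by simp [hS]) _ (by simp)
  have hbb : BddBelow S := hcomp.bddBelow
  have hba : BddAbove S := hcomp.bddAbove
  set a := sInf S with ha_def
  set c := sSup S with hc_def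
  have ha : a ∈ S := hcomp.sInf_mem hne
  have hc : c ∈ S := hcomp.sSup_mem hne
  have hSsub : S ⊆ Icc a c := fun x hx => ⟨csInf_le hbb hx, le_csSup hba hx⟩
  have hhull : convexHull ℝ S ⊆ Icc a c := convexHull_min hSsub (convex_Icc a c)
  have hIccHull : Icc a c ⊆ convexHull ℝ S :=
    (convex_convexHull ℝ S).ordConnected.out (subset_convexHull ℝ S ha) (subset_convexHull ℝ S hc)
  by_cases hfull : Icc a c ⊆ S
  · exact padlist [(a, c)] S (by simp [Subset.antisymm hSsub hfull]) _ (by simp)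
  obtain ⟨g, hgIcc, hgS⟩ : ∃ g, g ∈ Icc a c ∧ g ∉ S := by
    by_contra h; push_neg at h; exact hfull fun x hx => h x hx
  obtain ⟨V0, hV0l, hgV0⟩ : ∃ V0 ∈ l, g ∈ V0 := by
    have := hcover ⟨hIccHull hgIcc, hgS⟩
    simpa using this
  set W := V0 ∩ Icc a c with hW_def
  have hWne : W.Nonempty := ⟨g, hgV0, hgIcc⟩
  have hWbb : BddBelow W := (bddBelow_Icc).mono inter_subset_right
  have hWba : BddAbove W := (bddAbove_Icc).mono inter_subset_right
  set mm := sInf W with hm_def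
  set MM := sSup W with hM_def
  have hmM : mm ≤ MM := csInf_le_csSup hWne hWbb hWba
  have hWconv : Convex ℝ W := (hVl V0 hV0l).1.inter (convex_Icc a c)
  have hWdisj : Disjoint W S := ((hVl V0 hV0l).2).mono_left inter_subset_left
  have hsplit : ∀ s ∈ S, s ≤ mm ∨ MM ≤ s := by
    intro s hs
    by_contra h
    push_neg at h
    obtain ⟨w, hw, hws⟩ := exists_lt_of_csInf_lt hWne h.1
    obtain ⟨w', hw', hsw'⟩ := exists_lt_of_lt_csSup hWne h.2
    exact (disjoint_left.mp hWdisj (hWconv.ordConnected.out hw hw' ⟨hws.le, hsw'.le⟩)) hs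
  set SL := S ∩ Iic mm with hSL_def
  set SR := S ∩ Ici MM with hSR_def
  have hSL_comp : IsCompact SL := hcomp.inter_right isClosed_Iic
  have hSR_comp : IsCompact SR := hcomp.inter_right isClosed_Ici
  have hS_eq : S = SL ∪ SR := by
    apply Subset.antisymm
    · intro s hs
      rcases hsplit s hs with h | h
      · exact Or.inl ⟨hs, h⟩
      · exact Or.inr ⟨hs, h⟩
    · rintro s (⟨hs, -⟩ | ⟨hs, -⟩) <;> exact hs
  set l' := l.erase V0 with hl'_def
  have hl'len : l'.length + 1 = l.length := by
    have := List.length_pos_of_mem hV0l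
    rw [hl'_def, List.length_erase_of_mem hV0l]; omega
  have hl'sub : ∀ V ∈ l', V ∈ l := fun V hV => List.mem_of_mem_erase hV
  set pL : Set ℝ → Prop := fun V => (V ∩ convexHull ℝ SL).Nonempty with hpL_def
  set lL := l'.filter (fun V => decide (pL V)) with hlL_def
  set lR := l'.filter (fun V => !decide (pL V)) with hlR_def
  have hlen_split : lL.length + lR.length = l'.length := filtlen l' _
  have hSLsub : SL ⊆ S := inter_subset_left
  have hSRsub : SR ⊆ S := inter_subset_left
  have hhullL : convexHull ℝ SL ⊆ convexHull ℝ S := convexHull_mono hSLsub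
  have hhullR : convexHull ℝ SR ⊆ convexHull ℝ S := convexHull_mono hSRsub
  have hhullL_Iic : convexHull ℝ SL ⊆ Iic mm :=
    convexHull_min inter_subset_right (convex_Iic mm)
  have hhullR_Ici : convexHull ℝ SR ⊆ Ici MM :=
    convexHull_min inter_subset_right (convex_Ici MM)
  -- cover for SL
  have hcoverL : convexHull ℝ SL \ SL ⊆ ⋃ V ∈ lL, V := by
    rintro x ⟨hxh, hxnot⟩
    have hxm : x ≤ mm := hhullL_Iic hxh
    have hxS : x ∉ S := fun hxS => hxnot ⟨hxS, hxm⟩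
    have hxcov := hcover ⟨hhullL hxh, hxS⟩
    simp only [mem_iUnion] at hxcov ⊢
    obtain ⟨V, hVl2, hxV⟩ := hxcov
    by_cases hVV0 : V = V0
    · exfalso
      subst hVV0
      have hxW : x ∈ W := ⟨hxV, hhull (hhullL hxh)⟩
      have hmx : mm ≤ x := csInf_le hWbb hxW
      have hSLne : SL.Nonempty := by
        rcases eq_empty_or_nonempty SL with h | h
        · rw [h] at hxh; simp [convexHull_empty] at hxh
        · exact h
      have hcLS : sSup SL ∈ SL := hSL_comp.sSup_mem hSLne
      have h1 : x ≤ sSup SL := (hull_sub_Icc SL hSL_comp hxh).2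
      have h2 : sSup SL ≤ mm := hcLS.2
      have hxeq : x = sSup SL := le_antisymm h1 (by linarith)
      exact hxnot (hxeq ▸ hcLS)
    · have hVl' : V ∈ l' := (List.mem_erase_of_ne hVV0).mpr hVl2
      have hpLV : pL V := ⟨x, hxV, hxh⟩
      exact ⟨V, List.mem_filter.mpr ⟨hVl', decide_eq_true hpLV⟩, hxV⟩
  -- cover for SR
  have hcoverR : convexHull ℝ SR \ SR ⊆ ⋃ V ∈ lR, V := by
    rintro x ⟨hxh, hxnot⟩
    have hxM : MM ≤ x := hhullR_Ici hxh
    have hxS : x ∉ S := fun hxS => hxnot ⟨hxS, hxM⟩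
    have hxcov := hcover ⟨hhullR hxh, hxS⟩
    simp only [mem_iUnion] at hxcov ⊢
    obtain ⟨V, hVl2, hxV⟩ := hxcov
    by_cases hVV0 : V = V0
    · exfalso
      subst hVV0
      have hxW : x ∈ W := ⟨hxV, hhull (hhullR hxh)⟩
      have hMx : x ≤ MM := le_csSup hWba hxW
      have hSRne : SR.Nonempty := by
        rcases eq_empty_or_nonempty SR with h | h
        · rw [h] at hxh; simp [convexHull_empty] at hxh
        · exact h
      have haRS : sInf SR ∈ SR := hSR_comp.sInf_mem hSRne
      have h1 : sInf SR ≤ x := (hull_sub_Icc SR hSR_comp hxh).1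
      have h2 : MM ≤ sInf SR := haRS.2
      have hxeq : x = sInf SR := le_antisymm (by linarith) h1
      exact hxnot (hxeq ▸ haRS)
    · have hVl' : V ∈ l' := (List.mem_erase_of_ne hVV0).mpr hVl2
      have hnpL : ¬ pL V := by
        rintro ⟨y, hyV, hyh⟩
        have hSLne : SL.Nonempty := by
          rcases eq_empty_or_nonempty SL with h | h
          · rw [h] at hyh; simp [convexHull_empty] at hyh
          · exact h
        have hcLS : sSup SL ∈ SL := hSL_comp.sSup_mem hSLne
        have hy1 : y ≤ sSup SL := (hull_sub_Icc SL hSL_comp hyh).2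
        have h2 : sSup SL ≤ mm := hcLS.2
        have hxc : sSup SL ≤ x := by linarith
        have hmem : sSup SL ∈ V :=
          (hVl V (hl'sub V hVl')).1.ordConnected.out hyV hxV ⟨hy1, hxc⟩
        exact (disjoint_left.mp (hVl V (hl'sub V hVl')).2 hmem) (hSLsub hcLS)
      exact ⟨V, List.mem_filter.mpr ⟨hVl', by simp [hnpL]⟩, hxV⟩
  -- apply IH
  have hlLlt : lL.length < n := by
    have : lL.length ≤ l'.length := List.length_filter_le _ _
    omega
  have hlRlt : lR.length < n := by
    have : lR.length ≤ l'.length := List.length_filter_le _ _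
    omega
  obtain ⟨pl, hpl_len, hpl⟩ := ih lL.length hlLlt lL SL rfl hSL_comp
    (fun V hV => ⟨(hVl V (hl'sub V (List.mem_of_mem_filter hV))).1,
      ((hVl V (hl'sub V (List.mem_of_mem_filter hV))).2).mono_right hSLsub⟩) hcoverL
  obtain ⟨pr, hpr_len, hpr⟩ := ih lR.length hlRlt lR SR rfl hSR_comp
    (fun V hV => ⟨(hVl V (hl'sub V (List.mem_of_mem_filter hV))).1,
      ((hVl V (hl'sub V (List.mem_of_mem_filter hV))).2).mono_right hSRsub⟩) hcoverR
  refine ⟨pl ++ pr, by simp [hpl_len, hpr_len]; omega, ?_⟩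
  rw [hS_eq, hpl, hpr]
  ext x
  simp only [mem_union, mem_iUnion, List.mem_append]
  constructor
  · rintro (⟨q, hq, hx⟩ | ⟨q, hq, hx⟩)
    · exact ⟨q, Or.inl hq, hx⟩
    · exact ⟨q, Or.inr hq, hx⟩
  · rintro ⟨q, hq | hq, hx⟩
    · exact Or.inl ⟨q, hq, hx⟩
    · exact Or.inr ⟨q, hq, hx⟩

private theorem list_to_fin (p : List (ℝ×ℝ)) (S : Set ℝ) (n : ℕ) (hlen : p.length = n)
    (hS : S = ⋃ q ∈ p, Icc q.1 q.2) :
    ∃ aa cc : Fin n → ℝ, S = ⋃ i, Icc (aa i) (cc i) := by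
  subst hlen
  refine ⟨fun i => (p.get i).1, fun i => (p.get i).2, ?_⟩
  rw [hS]; ext x
  simp only [mem_iUnion]
  constructor
  · rintro ⟨q, hq, hx⟩
    obtain ⟨i, rfl⟩ := List.mem_iff_get.mp hq
    exact ⟨i, hx⟩
  · rintro ⟨i, hx⟩
    exact ⟨p.get i, List.get_mem p i, hx⟩


/-- Claim B3: for types ordered by risk aversion (pairwise weighted
differences strictly quasi-concave), the upper envelope `v = max_j (α_j u_j + b_j)`
has structured argmax regions: the set where type `k` attains `v` is a union of at
most `k` (1-based) closed intervals; whatever of its convex hull it misses is covered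
by argmax regions of more risk-averse (lower-index) types; and
`η_k = α_k u_k + b_k − max_{j>k}(α_j u_j + b_j)` is strictly quasi-concave. -/
theorem stmt9 (X : ℝ) (hX : 0 < X) (N : ℕ) (u : Fin N → ℝ → ℝ)
    (hu : ∀ i, ContinuousOn (u i) (Icc 0 X))
    (hudec : ∀ i, StrictAntiOn (u i) (Icc 0 X))
    (hqc : ∀ i j : Fin N, i < j → ∀ a b : ℝ, 0 < a → 0 < b →
      ∀ x ∈ Icc (0:ℝ) X, ∀ y ∈ Icc (0:ℝ) X, x ≠ y → ∀ l ∈ Ioo (0:ℝ) 1,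
        min (a * u i x - b * u j x) (a * u i y - b * u j y)
          < a * u i (l * x + (1 - l) * y) - b * u j (l * x + (1 - l) * y))
    (α : Fin N → ℝ) (hα : ∀ i, 0 < α i) (b : Fin N → ℝ)
    (v : ℝ → ℝ)
    (hv : ∀ x ∈ Icc (0:ℝ) X,
      (∀ j, α j * u j x + b j ≤ v x) ∧ ∃ j, v x = α j * u j x + b j)
    (k : Fin N)
    (m : ℝ → ℝ)
    (hm : ∀ x ∈ Icc (0:ℝ) X,
      (∀ j, k < j → α j * u j x + b j ≤ m x) ∧ ∃ j, k < j ∧ m x = α j * u j x + b j) :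
    -- η_k is strictly quasi-concave on [0,X]
    (∀ x ∈ Icc (0:ℝ) X, ∀ y ∈ Icc (0:ℝ) X, x ≠ y → ∀ l ∈ Ioo (0:ℝ) 1,
      min (α k * u k x + b k - m x) (α k * u k y + b k - m y)
        < α k * u k (l * x + (1 - l) * y) + b k - m (l * x + (1 - l) * y)) ∧
    -- the argmax region of type k is a union of at most k (1-based) closed intervals
    (∃ aa cc : Fin (k.val + 1) → ℝ,
      {x ∈ Icc (0:ℝ) X | α k * u k x + b k = v x} = ⋃ i, Icc (aa i) (cc i)) ∧
    -- its convex hull is filled in by argmax regions of more risk-averse types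
    (convexHull ℝ {x ∈ Icc (0:ℝ) X | α k * u k x + b k = v x})
        \ {x ∈ Icc (0:ℝ) X | α k * u k x + b k = v x}
      ⊆ ⋃ j < k, {x ∈ Icc (0:ℝ) X | α j * u j x + b j = v x} := by
  classical
  set S := {x ∈ Icc (0:ℝ) X | α k * u k x + b k = v x} with hS_def
  have hSchar : ∀ x, x ∈ S ↔ x ∈ Icc (0:ℝ) X ∧ ∀ j, α j * u j x + b j ≤ α k * u k x + b k := by
    intro x
    constructor
    · rintro ⟨hx, heq⟩
      exact ⟨hx, fun j => heq ▸ (hv x hx).1 j⟩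
    · rintro ⟨hx, hall⟩
      refine ⟨hx, ?_⟩
      obtain ⟨j, hj⟩ := (hv x hx).2
      exact le_antisymm ((hv x hx).1 k) (hj ▸ hall j)
  -- generic convexity of upward-closed level sets of quasiconcave pair differences
  have hconv : ∀ (i j : Fin N), i < j → ∀ (r : ℝ → Prop), (∀ s t, r s → s ≤ t → r t) →
      Convex ℝ {x ∈ Icc (0:ℝ) X | r (α i * u i x - α j * u j x)} := by
    intro i j hij r hr x hx y hy p q hp hq hpq
    obtain ⟨hx1, hx2⟩ := hx
    obtain ⟨hy1, hy2⟩ := hy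
    have hz : p • x + q • y ∈ Icc (0:ℝ) X := (convex_Icc (0:ℝ) X) hx1 hy1 hp hq hpq
    refine ⟨hz, ?_⟩
    rcases eq_or_lt_of_le hp with hp0 | hp0
    · have hq1 : q = 1 := by linarith
      have hcombo : p • x + q • y = y := by rw [← hp0, hq1]; simp
      rw [hcombo]; exact hy2
    rcases eq_or_lt_of_le hq with hq0 | hq0
    · have hp1 : p = 1 := by linarith
      have hcombo : p • x + q • y = x := by rw [← hq0, hp1]; simp
      rw [hcombo]; exact hx2
    by_cases hxy : x = y
    · subst hxy
      have hcombo : p • x + q • x = x := by rw [← add_smul, hpq, one_smul]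
      rw [hcombo]; exact hx2
    have hq1 : q = 1 - p := by linarith
    have hcombo : p • x + q • y = p * x + (1 - p) * y := by
      simp [smul_eq_mul, hq1]
    have hquse := hqc i j hij (α i) (α j) (hα i) (hα j) x hx1 y hy1 hxy p ⟨hp0, by linarith⟩
    rw [hcombo]
    refine hr _ _ ?_ hquse.le
    rcases min_cases (α i * u i x - α j * u j x) (α i * u i y - α j * u j y) with ⟨h, -⟩ | ⟨h, -⟩
    · rw [h]; exact hx2
    · rw [h]; exact hy2
  have hcov : ∀ x ∈ convexHull ℝ S \ S, x ∈ Icc (0:ℝ) X ∧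
      ∃ j, j < k ∧ α j * u j x + b j = v x ∧ α k * u k x + b k < α j * u j x + b j := by
    intro x hx
    obtain ⟨hxh, hxS⟩ := hx
    set C := Icc (0:ℝ) X ∩ ⋂ j : Fin N, ⋂ (_ : k < j),
      {x ∈ Icc (0:ℝ) X | b j - b k ≤ α k * u k x - α j * u j x} with hC_def
    have hCconv : Convex ℝ C :=
      (convex_Icc _ _).inter (convex_iInter fun j => convex_iInter fun hj =>
        hconv k j hj _ (fun s t hs hst => le_trans hs hst))
    have hSC : S ⊆ C := by
      intro y hy
      obtain ⟨hy1, hy2⟩ := (hSchar y).mp hy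
      refine ⟨hy1, ?_⟩
      simp only [mem_iInter]
      intro j hj
      exact ⟨hy1, by linarith [hy2 j]⟩
    have hxC : x ∈ C := convexHull_min hSC hCconv hxh
    obtain ⟨hxIcc, hxI⟩ := hxC
    simp only [mem_iInter] at hxI
    have hgek : ∀ j, k < j → α j * u j x + b j ≤ α k * u k x + b k := by
      intro j hj
      have := (hxI j hj).2
      linarith
    refine ⟨hxIcc, ?_⟩
    obtain ⟨js, hjs⟩ := (hv x hxIcc).2
    have hklt : α k * u k x + b k < v x :=
      lt_of_le_of_ne ((hv x hxIcc).1 k) (fun h => hxS ⟨hxIcc, h⟩)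
    rcases lt_trichotomy js k with h | h | h
    · exact ⟨js, h, hjs.symm, by linarith [hjs]⟩
    · subst h; linarith [hjs]
    · have := hgek js h
      linarith [hjs]
  refine ⟨?_, ?_, ?_⟩
  · -- Part 1: strict quasiconcavity of η_k
    intro x hx y hy hxy l hl
    have hz : l * x + (1 - l) * y ∈ Icc (0:ℝ) X := by
      obtain ⟨hx0, hxX⟩ := hx; obtain ⟨hy0, hyX⟩ := hy; obtain ⟨hl0, hl1⟩ := hl
      constructor <;> nlinarith
    obtain ⟨j, hkj, hmz⟩ := (hm _ hz).2
    have hq := hqc k j hkj (α k) (α j) (hα k) (hα j) x hx y hy hxy l hl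
    have h1 : α j * u j x + b j ≤ m x := (hm x hx).1 j hkj
    have h2 : α j * u j y + b j ≤ m y := (hm y hy).1 j hkj
    rcases le_total (α k * u k x - α j * u j x) (α k * u k y - α j * u j y) with h | h
    · rw [min_eq_left h] at hq
      have hmin := min_le_left (α k * u k x + b k - m x) (α k * u k y + b k - m y)
      linarith
    · rw [min_eq_right h] at hq
      have hmin := min_le_right (α k * u k x + b k - m x) (α k * u k y + b k - m y)
      linarith
  · -- Part 2
    have hcont : ∀ j : Fin N, ContinuousOn (fun x => α j * u j x + b j - (α k * u k x + b k)) (Icc (0:ℝ) X) := by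
      intro j
      exact ((continuousOn_const.mul (hu j)).add continuousOn_const).sub
        ((continuousOn_const.mul (hu k)).add continuousOn_const)
    have hSclosed : IsClosed S := by
      have hSeq : S = ⋂ j : Fin N, (Icc (0:ℝ) X ∩ (fun x => α j * u j x + b j - (α k * u k x + b k)) ⁻¹' Iic 0) := by
        ext x
        simp only [mem_iInter, mem_inter_iff, mem_preimage, mem_Iic]
        constructor
        · intro hx j
          obtain ⟨h1, h2⟩ := (hSchar x).mp hx
          exact ⟨h1, by linarith [h2 j]⟩
        · intro h
          exact (hSchar x).mpr ⟨(h k).1, fun j => by linarith [(h j).2]⟩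
      rw [hSeq]
      exact isClosed_iInter fun j =>
        (hcont j).preimage_isClosed_of_isClosed isClosed_Icc isClosed_Iic
    have hScomp : IsCompact S :=
      IsCompact.of_isClosed_subset isCompact_Icc hSclosed (fun x hx => ((hSchar x).mp hx).1)
    set Vs : Fin N → Set ℝ := fun j => {x ∈ Icc (0:ℝ) X | α k * u k x + b k < α j * u j x + b j} with hVs_def
    have hVconv : ∀ j, j < k → Convex ℝ (Vs j) := by
      intro j hjk
      have heq : Vs j = {x ∈ Icc (0:ℝ) X | (fun s => b k - b j < s) (α j * u j x - α k * u k x)} := by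
        ext x
        simp only [hVs_def, mem_setOf_eq]
        constructor <;> rintro ⟨h1, h2⟩ <;> exact ⟨h1, by linarith⟩
      rw [heq]
      exact hconv j k hjk _ (fun s t hs hst => lt_of_lt_of_le hs hst)
    have hVdisj : ∀ j, Disjoint (Vs j) S := by
      intro j
      rw [Set.disjoint_left]
      rintro x ⟨-, h2⟩ hxS
      exact absurd (((hSchar x).mp hxS).2 j) (not_le.mpr h2)
    set lst : List (Set ℝ) := (List.range k.val).attach.map
      (fun j => Vs ⟨j.1, lt_trans (List.mem_range.mp j.2) k.isLt⟩) with hlst_def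
    have hlstlen : lst.length = k.val := by simp [hlst_def]
    have hlstmem : ∀ j : Fin N, j < k → Vs j ∈ lst := by
      intro j hjk
      rw [hlst_def]
      apply List.mem_map.mpr
      refine ⟨⟨j.val, List.mem_range.mpr hjk⟩, List.mem_attach _ _, ?_⟩
      congr 1
    have hprops : ∀ V ∈ lst, Convex ℝ V ∧ Disjoint V S := by
      intro V hV
      rw [hlst_def] at hV
      obtain ⟨jp, -, rfl⟩ := List.mem_map.mp hV
      have hjk : (⟨jp.1, lt_trans (List.mem_range.mp jp.2) k.isLt⟩ : Fin N) < k :=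
        Fin.lt_def.mpr (List.mem_range.mp jp.2)
      exact ⟨hVconv _ hjk, hVdisj _⟩
    have hcover : convexHull ℝ S \ S ⊆ ⋃ V ∈ lst, V := by
      intro x hx
      obtain ⟨hxIcc, j, hjk, -, hlt⟩ := hcov x hx
      simp only [mem_iUnion]
      exact ⟨Vs j, hlstmem j hjk, hxIcc, hlt⟩
    obtain ⟨p, hplen, hp⟩ := key lst.length lst S rfl hScomp hprops hcover
    exact list_to_fin p S (k.val + 1) (by rw [hplen, hlstlen]) hp
  · -- Part 3
    rintro x hx
    obtain ⟨hxIcc, j, hjk, heq, -⟩ := hcov x hx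
    simp only [mem_iUnion]
    exact ⟨j, hjk, hxIcc, heq⟩
end

section
/- Let (q_1,...,q_N) be a feasible allocation of supply f over [0, X̄] with no disposal (Σ_i μ_i q_i(x) = f(x) a.e. on [0, X̄], and q_i([0, X̄]) = 1 for all i) and no inverted spread between any pair j < k. Then for all j < k, the support of q_k intersects the convex hull of the support of q_j in a set of Lebesgue measure zero. -/
open Set MeasureTheory

/-- The (topological) support of a lottery: points all of whose neighborhoods carry
positive mass. -/
def lotterySupport (q : Measure ℝ) : Set ℝ := {x | ∀ U ∈ nhds x, 0 < q U}

/-- Claim B1: in a feasible allocation with no disposal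
(`Σ_i μ_i q_i` equals the supply on `[0, X̄]`, each `q_i` a lottery on `[0, X̄]`)
and no inverted spread between any pair `j < k`, the support of `q_k` meets the
convex hull of the support of `q_j` in a Lebesgue-null set, for all `j < k`. -/
theorem stmt11 (Xb : ℝ) (hXb : 0 < Xb) (N : ℕ) (μ : Fin N → ℝ) (hμ : ∀ i, 0 < μ i)
    (f : ℝ → ℝ) (hf : ContinuousOn f (Icc 0 Xb)) (hfpos : ∀ x ∈ Icc (0:ℝ) Xb, 0 < f x)
    (q : Fin N → Measure ℝ) (hprob : ∀ i, IsProbabilityMeasure (q i))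
    (hsupp : ∀ i, q i (Icc (0:ℝ) Xb)ᶜ = 0)
    (hnodisp : ∑ i, ENNReal.ofReal (μ i) • q i
        = (volume.restrict (Icc (0:ℝ) Xb)).withDensity (fun x => ENNReal.ofReal (f x)))
    (hnospread : ∀ j k : Fin N, j < k →
      ¬ ∃ A B C : Set ℝ, MeasurableSet A ∧ MeasurableSet B ∧ MeasurableSet C ∧
        A ⊆ Icc 0 Xb ∧ B ⊆ Icc 0 Xb ∧ C ⊆ Icc 0 Xb ∧
        (∀ a ∈ A, ∀ b ∈ B, a < b) ∧ (∀ b ∈ B, ∀ c ∈ C, b < c) ∧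
        0 < q j A ∧ 0 < q k B ∧ 0 < q j C) :
    ∀ j k : Fin N, j < k →
      volume (convexHull ℝ (lotterySupport (q j)) ∩ lotterySupport (q k)) = 0 := by
  intro j k hjk
  by_contra hvol
  set T := lotterySupport (q j) with hTdef
  set S := convexHull ℝ T ∩ lotterySupport (q k) with hSdef
  -- Find a "good" point of S: strictly between two support points of q j.
  have hgood : ∃ x ∈ S, (∃ a ∈ T, a < x) ∧ (∃ b ∈ T, x < b) := by
    by_contra hg
    push_neg at hg
    set P1 : Set ℝ := {x | x ∈ convexHull ℝ T ∧ ∀ a ∈ T, x ≤ a} with hP1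
    set P2 : Set ℝ := {x | x ∈ convexHull ℝ T ∧ ∀ b ∈ T, b ≤ x} with hP2
    have hsub : S ⊆ P1 ∪ P2 := by
      intro x hx
      by_cases h : ∃ a ∈ T, a < x
      · exact Or.inr ⟨hx.1, hg x hx h⟩
      · push_neg at h
        exact Or.inl ⟨hx.1, fun a ha => (h a ha)⟩
    have hP1sub : P1.Subsingleton := by
      intro x hx y hy
      by_contra hne
      rcases lt_or_gt_of_ne hne with h | h
      · have hT2 : T ⊆ Ici y := fun a ha => hy.2 a ha
        have := convexHull_min hT2 (convex_Ici y) hx.1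
        exact absurd this (by simpa using h)
      · have hT2 : T ⊆ Ici x := fun a ha => hx.2 a ha
        have := convexHull_min hT2 (convex_Ici x) hy.1
        exact absurd this (by simpa using h)
    have hP2sub : P2.Subsingleton := by
      intro x hx y hy
      by_contra hne
      rcases lt_or_gt_of_ne hne with h | h
      · have hT2 : T ⊆ Iic x := fun a ha => hx.2 a ha
        have := convexHull_min hT2 (convex_Iic x) hy.1
        exact absurd this (by simpa using h)
      · have hT2 : T ⊆ Iic y := fun a ha => hy.2 a ha
        have := convexHull_min hT2 (convex_Iic y) hx.1
        exact absurd this (by simpa using h)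
    have : volume S ≤ volume P1 + volume P2 :=
      le_trans (measure_mono hsub) (measure_union_le _ _)
    rw [hP1sub.measure_zero, hP2sub.measure_zero, add_zero] at this
    exact hvol (le_antisymm this zero_le)
  obtain ⟨x, hxS, ⟨a, haT, hax⟩, ⟨b, hbT, hxb⟩⟩ := hgood
  set u := (a + x) / 2 with hu
  set v := (x + b) / 2 with hv
  have hau : a < u := by simp [hu]; linarith
  have hux : u < x := by simp [hu]; linarith
  have hxv : x < v := by simp [hv]; linarith
  have hvb : v < b := by simp [hv]; linarith
  set A : Set ℝ := Icc 0 Xb ∩ Iio u with hA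
  set B : Set ℝ := Icc 0 Xb ∩ Ioo u v with hB
  set C : Set ℝ := Icc 0 Xb ∩ Ioi v with hC
  have key : ∀ (i : Fin N) (U : Set ℝ), 0 < q i U → 0 < q i (Icc 0 Xb ∩ U) := by
    intro i U hU
    have h2 : q i U ≤ q i (Icc 0 Xb ∩ U) + q i (Icc 0 Xb)ᶜ := by
      refine le_trans (measure_mono ?_) (measure_union_le _ _)
      intro y hy
      by_cases h : y ∈ Icc (0:ℝ) Xb
      · exact Or.inl ⟨h, hy⟩
      · exact Or.inr h
    rw [hsupp i, add_zero] at h2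
    exact lt_of_lt_of_le hU h2
  have hqjA : 0 < q j A := key j _ (haT (Iio u) (Iio_mem_nhds hau))
  have hqkB : 0 < q k B := key k _ (hxS.2 (Ioo u v) (Ioo_mem_nhds hux hxv))
  have hqjC : 0 < q j C := key j _ (hbT (Ioi v) (Ioi_mem_nhds hvb))
  exact hnospread j k hjk ⟨A, B, C,
    measurableSet_Icc.inter measurableSet_Iio,
    measurableSet_Icc.inter measurableSet_Ioo,
    measurableSet_Icc.inter measurableSet_Ioi,
    inter_subset_left, inter_subset_left, inter_subset_left,
    fun a' ha' b' hb' => lt_trans ha'.2 hb'.2.1,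
    fun b' hb' c' hc' => lt_trans hb'.2.2 hc'.2,
    hqjA, hqkB, hqjC⟩
end

section
/- Suppose an optimal incentive-compatible allocation (q_1,...,q_N) has a directed cycle of binding incentive constraints: there exist distinct types k_1,...,k_m with V_{k_i}(q_{k_i}) = V_{k_i}(q_{k_{i+1}}) for i = 1,...,m (indices mod m). Then the allocation q' defined by q'_{k_i} = (1 − ε/μ_{k_i}) q_{k_i} + (ε/μ_{k_i}) q_{k_{i+1}} for ε = (1/2)·min_j μ_j, and q'_j = q_j for other types, is feasible, incentive compatible, gives every type the same expected utility as q, and hence achieves the same welfare while q' ≠ q whenever the q_{k_i} are pairwise distinct. -/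
open MeasureTheory

/-- Proposition 5, Part 2, the cycle-breaking construction: if an optimal
incentive-compatible allocation has a directed cycle `k_1 → k_2 → ⋯ → k_m → k_1`
(`m ≥ 2`) of binding IC constraints, then the mixed allocation
`q'_{k_i} = (1 − ε/μ_{k_i}) q_{k_i} + (ε/μ_{k_i}) q_{k_{i+1}}`, `ε = (1/2)·min_j μ_j`,
with `q'_j = q_j` for all other types, is feasible, incentive compatible, gives every
type the same expected utility (hence the same welfare), and differs from `q` whenever
the lotteries `q_{k_i}` are pairwise distinct. -/
theorem stmt12 {Ω : Type*} [MeasurableSpace Ω] (N : ℕ)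
    (μ : Fin N → ℝ) (hμ : ∀ i, 0 < μ i)
    (u : Fin N → Ω → ℝ) (ν : Measure Ω)
    (q : Fin N → Measure Ω) (hprob : ∀ i, IsProbabilityMeasure (q i))
    (hint : ∀ l j, Integrable (u l) (q j))
    (hfeas : ∑ i, ENNReal.ofReal (μ i) • q i ≤ ν)
    (hIC : ∀ l j : Fin N, ∫ ω, u l ω ∂(q j) ≤ ∫ ω, u l ω ∂(q l))
    (m : ℕ) (k : Fin (m + 2) → Fin N) (hkinj : Function.Injective k)
    (hbind : ∀ i : Fin (m + 2), ∫ ω, u (k i) ω ∂(q (k i)) = ∫ ω, u (k i) ω ∂(q (k (i + 1))))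
    (ε : ℝ) (hε : (∃ j, ε = μ j / 2) ∧ ∀ j, ε ≤ μ j / 2)
    (q' : Fin N → Measure Ω)
    (hq'cyc : ∀ i : Fin (m + 2), q' (k i) =
      ENNReal.ofReal (1 - ε / μ (k i)) • q (k i) + ENNReal.ofReal (ε / μ (k i)) • q (k (i + 1)))
    (hq'other : ∀ j : Fin N, (∀ i, k i ≠ j) → q' j = q j) :
    (∀ i, IsProbabilityMeasure (q' i)) ∧
    (∑ i, ENNReal.ofReal (μ i) • q' i ≤ ν) ∧
    (∀ l j : Fin N, ∫ ω, u l ω ∂(q' j) ≤ ∫ ω, u l ω ∂(q' l)) ∧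
    (∀ l : Fin N, ∫ ω, u l ω ∂(q' l) = ∫ ω, u l ω ∂(q l)) ∧
    (Function.Injective (fun i => q (k i)) → q' ≠ q) := by
  have hε0 : 0 < ε := by
    obtain ⟨j, hj⟩ := hε.1
    have := hμ j; linarith
  -- basic facts about the weights t i = ε / μ (k i)
  have ht0 : ∀ i : Fin (m + 2), 0 < ε / μ (k i) := fun i => div_pos hε0 (hμ (k i))
  have ht1 : ∀ i : Fin (m + 2), ε / μ (k i) < 1 := by
    intro i
    rw [div_lt_one (hμ (k i))]
    have := hε.2 (k i); have := hμ (k i); linarith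
  have h1t : ∀ i : Fin (m + 2), 0 < 1 - ε / μ (k i) := fun i => by linarith [ht1 i]
  -- the coefficients sum to 1
  have hcoef : ∀ i : Fin (m + 2),
      ENNReal.ofReal (1 - ε / μ (k i)) + ENNReal.ofReal (ε / μ (k i)) = 1 := by
    intro i
    rw [← ENNReal.ofReal_add (le_of_lt (h1t i)) (le_of_lt (ht0 i))]
    norm_num
  -- integral of u l against q' (k i)
  have key : ∀ (l : Fin N) (i : Fin (m + 2)),
      ∫ ω, u l ω ∂(q' (k i)) =
        (1 - ε / μ (k i)) * ∫ ω, u l ω ∂(q (k i)) +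
          (ε / μ (k i)) * ∫ ω, u l ω ∂(q (k (i + 1))) := by
    intro l i
    rw [hq'cyc i,
      integral_add_measure ((hint l (k i)).smul_measure ENNReal.ofReal_ne_top)
        ((hint l (k (i + 1))).smul_measure ENNReal.ofReal_ne_top),
      integral_smul_measure, integral_smul_measure,
      ENNReal.toReal_ofReal (le_of_lt (h1t i)), ENNReal.toReal_ofReal (le_of_lt (ht0 i))]
    simp [smul_eq_mul]
  -- part 4: same expected utility
  have part4 : ∀ l : Fin N, ∫ ω, u l ω ∂(q' l) = ∫ ω, u l ω ∂(q l) := by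
    intro l
    by_cases h : ∃ i, k i = l
    · obtain ⟨i, rfl⟩ := h
      rw [key (k i) i, ← hbind i]
      ring
    · push_neg at h
      rw [hq'other l h]
  refine ⟨?_, ?_, ?_, part4, ?_⟩
  · -- probability measures
    intro j
    by_cases h : ∃ i, k i = j
    · obtain ⟨i, rfl⟩ := h
      constructor
      rw [hq'cyc i]
      simp only [Measure.add_apply, Measure.smul_apply, smul_eq_mul,
        (hprob (k i)).measure_univ, (hprob (k (i + 1))).measure_univ, mul_one]
      exact hcoef i
    · push_neg at h
      rw [hq'other j h]
      exact hprob j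
  · -- feasibility
    have hsum : ∑ i, ENNReal.ofReal (μ i) • q' i = ∑ i, ENNReal.ofReal (μ i) • q i := by
      have hsplit : ∀ r : Fin N → Measure Ω,
          ∑ i, ENNReal.ofReal (μ i) • r i =
            (∑ i ∈ (Finset.image k Finset.univ)ᶜ, ENNReal.ofReal (μ i) • r i) +
              ∑ j : Fin (m + 2), ENNReal.ofReal (μ (k j)) • r (k j) := by
        intro r
        have himg : ∑ j : Fin (m + 2), ENNReal.ofReal (μ (k j)) • r (k j)
            = ∑ i ∈ Finset.image k Finset.univ, ENNReal.ofReal (μ i) • r i :=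
          (Finset.sum_image (f := fun i => ENNReal.ofReal (μ i) • r i) (fun x _ y _ h => hkinj h)).symm
        rw [himg]
        exact (Finset.sum_compl_add_sum _ _).symm
      rw [hsplit q', hsplit q]
      congr 1
      · refine Finset.sum_congr rfl fun i hi => ?_
        rw [hq'other i]
        intro j hj
        simp only [Finset.mem_compl, Finset.mem_image] at hi
        exact hi ⟨j, Finset.mem_univ j, hj⟩
      · -- cycle part: equal sums
        have step : ∀ j : Fin (m + 2), ENNReal.ofReal (μ (k j)) • q' (k j) =
            ENNReal.ofReal (μ (k j) - ε) • q (k j) + ENNReal.ofReal ε • q (k (j + 1)) := by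
          intro j
          rw [hq'cyc j, smul_add, smul_smul, smul_smul,
            ← ENNReal.ofReal_mul (le_of_lt (hμ (k j))),
            ← ENNReal.ofReal_mul (le_of_lt (hμ (k j)))]
          have h2 : μ (k j) * (ε / μ (k j)) = ε := by
            rw [← mul_div_assoc, mul_div_cancel_left₀ _ (hμ (k j)).ne']
          have h1 : μ (k j) * (1 - ε / μ (k j)) = μ (k j) - ε := by
            rw [mul_sub, mul_one, h2]
          rw [h1, h2]
        calc ∑ j : Fin (m + 2), ENNReal.ofReal (μ (k j)) • q' (k j)
            = ∑ j : Fin (m + 2), (ENNReal.ofReal (μ (k j) - ε) • q (k j)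
                + ENNReal.ofReal ε • q (k (j + 1))) := Finset.sum_congr rfl fun j _ => step j
          _ = (∑ j : Fin (m + 2), ENNReal.ofReal (μ (k j) - ε) • q (k j))
                + ∑ j : Fin (m + 2), ENNReal.ofReal ε • q (k (j + 1)) := Finset.sum_add_distrib
          _ = (∑ j : Fin (m + 2), ENNReal.ofReal (μ (k j) - ε) • q (k j))
                + ∑ j : Fin (m + 2), ENNReal.ofReal ε • q (k j) := by
              congr 1
              exact Fintype.sum_equiv (Equiv.addRight (1 : Fin (m + 2))) _ _ (fun x => rfl)
          _ = ∑ j : Fin (m + 2), ENNReal.ofReal (μ (k j)) • q (k j) := by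
              rw [← Finset.sum_add_distrib]
              refine Finset.sum_congr rfl fun j _ => ?_
              rw [← add_smul, ← ENNReal.ofReal_add (by
                have := hε.2 (k j); have := hμ (k j); linarith) (le_of_lt hε0)]
              norm_num
    rw [hsum]; exact hfeas
  · -- incentive compatibility
    intro l j
    rw [part4 l]
    by_cases h : ∃ i, k i = j
    · obtain ⟨i, rfl⟩ := h
      rw [key l i]
      have h1 := hIC l (k i)
      have h2 := hIC l (k (i + 1))
      nlinarith [ht0 i, h1t i]
    · push_neg at h
      rw [hq'other j h]
      exact hIC l j
  · -- q' ≠ q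
    intro hinj heq
    have h01 : q (k 0) = q (k 1) := by
      have hs : ∀ s : Set Ω, q (k 0) s =
          ENNReal.ofReal (1 - ε / μ (k 0)) * q (k 0) s
            + ENNReal.ofReal (ε / μ (k 0)) * q (k 0) s := by
        intro s
        rw [← add_mul, hcoef 0, one_mul]
      ext s hs'
      have h1 : q (k 0) s = ENNReal.ofReal (1 - ε / μ (k 0)) * q (k 0) s
          + ENNReal.ofReal (ε / μ (k 0)) * q (k (0 + 1)) s := by
        conv_lhs => rw [← heq]
        rw [hq'cyc 0]
        simp [smul_eq_mul]
      conv_lhs at h1 => rw [hs s]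
      have hfin : ENNReal.ofReal (1 - ε / μ (k 0)) * q (k 0) s ≠ ⊤ := by
        exact ENNReal.mul_ne_top ENNReal.ofReal_ne_top (measure_ne_top _ _)
      have h2 := (ENNReal.add_right_inj hfin).mp h1
      have h3 := (ENNReal.mul_right_inj
        (ENNReal.ofReal_pos.mpr (ht0 0)).ne'
        ENNReal.ofReal_ne_top).mp h2
      simpa using h3
    have : (0 : Fin (m + 2)) = 1 := hinj h01
    simp at this
end

section
/- Let A ◁ B ◁ C be nonempty measurable subsets of [0, X̄] (every point of A strictly below every point of B strictly below every point of C), let f be a strictly positive continuous density, and let u be a continuous strictly decreasing function. Then there is a unique γ ∈ (0,1) such that ∫ u d(γ·(f|A) + (1−γ)·(f|C)) = ∫ u d(f|B), where f|S denotes the normalization of f restricted to S. Moreover, if u₁, u₂ are two such utility functions with u₂ 'less risk averse' than u₁ in the sense that for every x ∈ B, the two-point indifference mixing weight for u₂ is strictly below that for u₁, then γ₂(A,B,C) < γ₁(A,B,C). -/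
open Set MeasureTheory

/-- The value of the normalized restriction `f | S` of the supply `f` to `S` under
utility `u`: the `f`-weighted average of `u` over `S`. -/
noncomputable def wAvg (f u : ℝ → ℝ) (S : Set ℝ) : ℝ :=
  (∫ x in S, u x * f x) / (∫ x in S, f x)

/-- positive integral of a.e.-positive (off one point) function on positive-measure set -/
lemma pos_setIntegral (S : Set ℝ) (hS : MeasurableSet S) (g : ℝ → ℝ)
    (hgi : IntegrableOn g S) (hgnn : ∀ x ∈ S, 0 ≤ g x) (m : ℝ)
    (hgpos : ∀ x ∈ S, x ≠ m → 0 < g x) (hμ : 0 < volume S) :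
    0 < ∫ x in S, g x := by
  rw [setIntegral_pos_iff_support_of_nonneg_ae
      ((ae_restrict_iff' hS).mpr (ae_of_all _ hgnn)) hgi]
  have hsub : S \ {m} ⊆ Function.support g ∩ S := by
    rintro x ⟨hxS, hxm⟩
    exact ⟨(hgpos x hxS (by simpa using hxm)).ne', hxS⟩
  calc 0 < volume S := hμ
    _ = volume (S \ {m}) := (measure_diff_null Real.volume_singleton).symm
    _ ≤ _ := measure_mono hsub

lemma mass_pos_volume (S : Set ℝ) (f : ℝ → ℝ) (hmass : 0 < ∫ x in S, f x) :
    0 < volume S := by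
  by_contra h
  push_neg at h
  have h0 : volume S = 0 := le_antisymm h bot_le
  rw [Measure.restrict_eq_zero.mpr h0, integral_zero_measure] at hmass
  exact lt_irrefl _ hmass

/-- main monotonicity: if all of S lies strictly below all of T, the f-weighted average
of a strictly decreasing u is strictly larger on S. -/
lemma wAvg_lt (Xb : ℝ) (f u : ℝ → ℝ) (hf : ContinuousOn f (Icc 0 Xb))
    (hfpos : ∀ x ∈ Icc (0:ℝ) Xb, 0 < f x)
    (hu : ContinuousOn u (Icc 0 Xb)) (hua : StrictAntiOn u (Icc 0 Xb))
    (S T : Set ℝ) (hSm : MeasurableSet S) (hTm : MeasurableSet T)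
    (hSsub : S ⊆ Icc 0 Xb) (hTsub : T ⊆ Icc 0 Xb)
    (hSne : S.Nonempty)
    (hST : ∀ s ∈ S, ∀ t ∈ T, s < t)
    (hTne : T.Nonempty)
    (hSmass : 0 < ∫ x in S, f x) (hTmass : 0 < ∫ x in T, f x) :
    wAvg f u T < wAvg f u S := by
  obtain ⟨t₀, ht₀⟩ := hTne
  set m := sSup S with hm
  have hbdd : BddAbove S := ⟨Xb, fun x hx => (hSsub hx).2⟩
  have hmle : ∀ s ∈ S, s ≤ m := fun s hs => le_csSup hbdd hs
  have hmIcc : m ∈ Icc (0:ℝ) Xb := by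
    obtain ⟨s₀, hs₀⟩ := id hSne
    exact ⟨le_trans (hSsub hs₀).1 (hmle s₀ hs₀), csSup_le hSne fun x hx => (hSsub hx).2⟩
  have hmT : ∀ t ∈ T, m ≤ t := fun t ht => csSup_le hSne fun s hs => (hST s hs t ht).le
  -- integrability helpers
  have hfint : IntegrableOn f (Icc 0 Xb) := hf.integrableOn_compact isCompact_Icc
  have hgc : ContinuousOn (fun x => (u x - u m) * f x) (Icc 0 Xb) :=
    ((hu.sub continuousOn_const).mul hf)
  have hgint : IntegrableOn (fun x => (u x - u m) * f x) S :=
    (hgc.integrableOn_compact isCompact_Icc).mono_set hSsub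
  have hufintT : IntegrableOn (fun x => u x * f x) T :=
    ((hu.mul hf).integrableOn_compact isCompact_Icc).mono_set hTsub
  have hufintS : IntegrableOn (fun x => u x * f x) S :=
    ((hu.mul hf).integrableOn_compact isCompact_Icc).mono_set hSsub
  have hfintS : IntegrableOn f S := hfint.mono_set hSsub
  have hfintT : IntegrableOn f T := hfint.mono_set hTsub
  -- wAvg S > u m
  have hS1 : 0 < ∫ x in S, (u x - u m) * f x := by
    refine pos_setIntegral S hSm _ hgint (fun x hx => ?_) m (fun x hx hxm => ?_)
      (mass_pos_volume S f hSmass)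
    · have : u m ≤ u x := hua.antitoneOn (hSsub hx) hmIcc (hmle x hx)
      exact mul_nonneg (by linarith) (hfpos x (hSsub hx)).le
    · have hlt : x < m := lt_of_le_of_ne (hmle x hx) hxm
      have : u m < u x := hua (hSsub hx) hmIcc hlt
      exact mul_pos (by linarith) (hfpos x (hSsub hx))
  have hSexp : ∫ x in S, (u x - u m) * f x
      = (∫ x in S, u x * f x) - u m * ∫ x in S, f x := by
    have : ∀ x, (u x - u m) * f x = u x * f x - u m * f x := fun x => by ring
    simp_rw [this]
    rw [integral_sub hufintS (hfintS.const_mul (u m)), integral_const_mul]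
  have hSgt : u m < wAvg f u S := by
    rw [wAvg, lt_div_iff₀ hSmass]
    rw [hSexp] at hS1; linarith
  -- wAvg T ≤ u m
  have hT1 : ∫ x in T, u x * f x ≤ ∫ x in T, u m * f x := by
    refine setIntegral_mono_on hufintT (hfintT.const_mul (u m)) hTm fun x hx => ?_
    have : u x ≤ u m := hua.antitoneOn hmIcc (hTsub hx) (hmT x hx)
    exact mul_le_mul_of_nonneg_right this (hfpos x (hTsub hx)).le
  have hTle : wAvg f u T ≤ u m := by
    rw [wAvg, div_le_iff₀ hTmass]
    rw [integral_const_mul] at hT1; linarith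
  linarith

lemma exu_mix (a b c : ℝ) (h1 : c < b) (h2 : b < a) :
    ∃! γ : ℝ, γ ∈ Ioo (0:ℝ) 1 ∧ γ * a + (1 - γ) * c = b := by
  have hac : a - c ≠ 0 := by linarith
  refine ⟨(b - c) / (a - c), ⟨⟨div_pos (by linarith) (by linarith),
    (div_lt_one (by linarith)).mpr (by linarith)⟩, by field_simp; ring⟩, ?_⟩
  rintro γ ⟨-, hγ⟩
  rw [eq_div_iff hac]
  nlinarith [hγ]

/-- Claim F1: for ordered sets `A ◁ B ◁ C` of positive supply mass,
there is a unique mixing weight `γ ∈ (0,1)` making an agent indifferent between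
`γ·(f|A) + (1−γ)·(f|C)` and `f|B`; and a less risk-averse agent (pointwise smaller
two-point indifference weights) has a strictly smaller weight: `γ₂ < γ₁`. -/
theorem stmt13 (Xb : ℝ) (hXb : 0 < Xb)
    (f : ℝ → ℝ) (hf : ContinuousOn f (Icc 0 Xb)) (hfpos : ∀ x ∈ Icc (0:ℝ) Xb, 0 < f x)
    (A B C : Set ℝ) (hA : MeasurableSet A) (hB : MeasurableSet B) (hC : MeasurableSet C)
    (hAsub : A ⊆ Icc 0 Xb) (hBsub : B ⊆ Icc 0 Xb) (hCsub : C ⊆ Icc 0 Xb)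
    (hAne : A.Nonempty) (hBne : B.Nonempty) (hCne : C.Nonempty)
    (hAB : ∀ a ∈ A, ∀ b ∈ B, a < b) (hBC : ∀ b ∈ B, ∀ c ∈ C, b < c)
    (hAmass : 0 < ∫ x in A, f x) (hBmass : 0 < ∫ x in B, f x) (hCmass : 0 < ∫ x in C, f x)
    (u₁ u₂ : ℝ → ℝ)
    (hu₁c : ContinuousOn u₁ (Icc 0 Xb)) (hu₂c : ContinuousOn u₂ (Icc 0 Xb))
    (hu₁a : StrictAntiOn u₁ (Icc 0 Xb)) (hu₂a : StrictAntiOn u₂ (Icc 0 Xb))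
    (hcmp : ∀ x ∈ B, ∀ g₁ g₂ : ℝ,
      g₁ * wAvg f u₁ A + (1 - g₁) * wAvg f u₁ C = u₁ x →
      g₂ * wAvg f u₂ A + (1 - g₂) * wAvg f u₂ C = u₂ x → g₂ < g₁) :
    (∃! γ : ℝ, γ ∈ Ioo (0:ℝ) 1 ∧
      γ * wAvg f u₁ A + (1 - γ) * wAvg f u₁ C = wAvg f u₁ B) ∧
    (∃! γ : ℝ, γ ∈ Ioo (0:ℝ) 1 ∧
      γ * wAvg f u₂ A + (1 - γ) * wAvg f u₂ C = wAvg f u₂ B) ∧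
    (∀ γ₁ γ₂ : ℝ, γ₁ ∈ Ioo (0:ℝ) 1 → γ₂ ∈ Ioo (0:ℝ) 1 →
      γ₁ * wAvg f u₁ A + (1 - γ₁) * wAvg f u₁ C = wAvg f u₁ B →
      γ₂ * wAvg f u₂ A + (1 - γ₂) * wAvg f u₂ C = wAvg f u₂ B →
      γ₂ < γ₁) := by
  have hAC : ∀ a ∈ A, ∀ c ∈ C, a < c := fun a ha c hc =>
    lt_trans (hAB a ha hBne.choose hBne.choose_spec)
      (hBC hBne.choose hBne.choose_spec c hc)
  have hba₁ : wAvg f u₁ B < wAvg f u₁ A :=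
    wAvg_lt Xb f u₁ hf hfpos hu₁c hu₁a A B hA hB hAsub hBsub hAne hAB hBne hAmass hBmass
  have hcb₁ : wAvg f u₁ C < wAvg f u₁ B :=
    wAvg_lt Xb f u₁ hf hfpos hu₁c hu₁a B C hB hC hBsub hCsub hBne hBC hCne hBmass hCmass
  have hba₂ : wAvg f u₂ B < wAvg f u₂ A :=
    wAvg_lt Xb f u₂ hf hfpos hu₂c hu₂a A B hA hB hAsub hBsub hAne hAB hBne hAmass hBmass
  have hcb₂ : wAvg f u₂ C < wAvg f u₂ B :=
    wAvg_lt Xb f u₂ hf hfpos hu₂c hu₂a B C hB hC hBsub hCsub hBne hBC hCne hBmass hCmass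
  refine ⟨exu_mix _ _ _ hcb₁ hba₁, exu_mix _ _ _ hcb₂ hba₂, ?_⟩
  intro γ₁ γ₂ hγ₁ hγ₂ he₁ he₂
  set a₁ := wAvg f u₁ A; set b₁ := wAvg f u₁ B; set c₁ := wAvg f u₁ C
  set a₂ := wAvg f u₂ A; set b₂ := wAvg f u₂ B; set c₂ := wAvg f u₂ C
  have hac₁ : c₁ < a₁ := lt_trans hcb₁ hba₁
  have hac₂ : c₂ < a₂ := lt_trans hcb₂ hba₂
  set G₁ : ℝ → ℝ := fun x => (u₁ x - c₁) / (a₁ - c₁) with hG₁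
  set G₂ : ℝ → ℝ := fun x => (u₂ x - c₂) / (a₂ - c₂) with hG₂
  have hGlt : ∀ x ∈ B, G₂ x < G₁ x := by
    intro x hx
    refine hcmp x hx (G₁ x) (G₂ x) ?_ ?_
    · show (u₁ x - c₁) / (a₁ - c₁) * a₁ + (1 - (u₁ x - c₁) / (a₁ - c₁)) * c₁ = u₁ x
      field_simp [sub_ne_zero.mpr hac₁.ne']
      ring
    · show (u₂ x - c₂) / (a₂ - c₂) * a₂ + (1 - (u₂ x - c₂) / (a₂ - c₂)) * c₂ = u₂ x
      field_simp [sub_ne_zero.mpr hac₂.ne']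
      ring
  -- integral identity: ∫_B G_i f = γ_i * ∫_B f
  have hfintB : IntegrableOn f B := (hf.integrableOn_compact isCompact_Icc).mono_set hBsub
  have hu₁fB : IntegrableOn (fun x => u₁ x * f x) B :=
    ((hu₁c.mul hf).integrableOn_compact isCompact_Icc).mono_set hBsub
  have hu₂fB : IntegrableOn (fun x => u₂ x * f x) B :=
    ((hu₂c.mul hf).integrableOn_compact isCompact_Icc).mono_set hBsub
  have key : ∀ (u : ℝ → ℝ) (a c γ : ℝ), c < a →
      IntegrableOn (fun x => u x * f x) B →
      γ * a + (1 - γ) * c = (∫ x in B, u x * f x) / (∫ x in B, f x) →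
      ∫ x in B, ((u x - c) / (a - c)) * f x = γ * ∫ x in B, f x := by
    intro u a c γ hca hint heq
    have hac : a - c ≠ 0 := by linarith
    have h1 : ∀ x, ((u x - c) / (a - c)) * f x
        = (a - c)⁻¹ * (u x * f x - c * f x) := fun x => by field_simp
    simp_rw [h1]
    rw [integral_const_mul, integral_sub hint (hfintB.const_mul c), integral_const_mul]
    have hBm := hBmass
    have heq' : γ * (a - c) * (∫ x in B, f x)
        = (∫ x in B, u x * f x) - c * ∫ x in B, f x := by
      have h2 : (γ * a + (1 - γ) * c) * (∫ x in B, f x) = ∫ x in B, u x * f x := by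
        rw [heq, div_mul_cancel₀ _ (ne_of_gt hBm)]
      nlinarith [h2]
    field_simp
    nlinarith [heq']
  have k₁ : ∫ x in B, G₁ x * f x = γ₁ * ∫ x in B, f x := key u₁ a₁ c₁ γ₁ hac₁ hu₁fB he₁
  have k₂ : ∫ x in B, G₂ x * f x = γ₂ * ∫ x in B, f x := key u₂ a₂ c₂ γ₂ hac₂ hu₂fB he₂
  -- positivity of the difference integral
  have hGc : ContinuousOn (fun x => (G₁ x - G₂ x) * f x) (Icc 0 Xb) := by
    apply ContinuousOn.mul _ hf
    exact ((hu₁c.sub continuousOn_const).div_const _).sub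
      ((hu₂c.sub continuousOn_const).div_const _)
  have hGint : IntegrableOn (fun x => (G₁ x - G₂ x) * f x) B :=
    (hGc.integrableOn_compact isCompact_Icc).mono_set hBsub
  have hpos : 0 < ∫ x in B, (G₁ x - G₂ x) * f x := by
    refine pos_setIntegral B hB _ hGint (fun x hx => ?_) (Xb + 1) (fun x hx _ => ?_)
      (mass_pos_volume B f hBmass)
    · exact mul_nonneg (by linarith [hGlt x hx]) (hfpos x (hBsub hx)).le
    · exact mul_pos (by linarith [hGlt x hx]) (hfpos x (hBsub hx))
  have hsplit : ∫ x in B, (G₁ x - G₂ x) * f x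
      = (∫ x in B, G₁ x * f x) - ∫ x in B, G₂ x * f x := by
    have h1 : ∀ x, (G₁ x - G₂ x) * f x = G₁ x * f x - G₂ x * f x := fun x => by ring
    simp_rw [h1]
    refine integral_sub ?_ ?_
    · exact ((((hu₁c.sub continuousOn_const).div_const _).mul hf).integrableOn_compact
        isCompact_Icc).mono_set hBsub
    · exact ((((hu₂c.sub continuousOn_const).div_const _).mul hf).integrableOn_compact
        isCompact_Icc).mono_set hBsub
  rw [hsplit, k₁, k₂] at hpos
  nlinarith [hpos, hBmass]
end

section
/- Suppose price schedules satisfy p(x) ≥ p^i(x) := u_i(x)/ξ_i − η_i/ξ_i for all x ∈ [0, X̄] with ξ_i > 0, η_i ≥ 0, where u_j, u_k are strictly decreasing with the pairwise curvature ordering (j more risk averse than k, j < k). Then g_{jk}(x) = p^j(x) − p^k(x) is strictly quasi-concave, and consequently: if p^j(x') = p(x') and p^j(x'') = p(x'') for x' < x < x'' and p^k ≤ p everywhere, then p^k(x) < p(x). -/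
open Set

/-- Claim D2: with `p^i(x) = u_i(x)/ξ_i − η_i/ξ_i` for types `j` (more
risk averse) and `k` (less risk averse) ordered by the curvature condition, the
difference `g_{jk} = p^j − p^k` is strictly quasi-concave on `[0, X̄]`; consequently,
if the equilibrium price `p` dominates both `p^j, p^k` and touches `p^j` at
`x' < x < x''`, then `p^k(x) < p(x)`. -/
theorem stmt16 (Xb : ℝ) (hXb : 0 < Xb)
    (uj uk : ℝ → ℝ)
    (hj2 : ContDiff ℝ 2 uj) (hk2 : ContDiff ℝ 2 uk)
    (hjanti : StrictAntiOn uj (Ici 0)) (hkanti : StrictAntiOn uk (Ici 0))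
    (hjder : ∀ x : ℝ, 0 ≤ x → deriv uj x < 0)
    (hkder : ∀ x : ℝ, 0 ≤ x → deriv uk x < 0)
    (hcurv : ∀ x : ℝ, 0 ≤ x →
      deriv (deriv uk) x / deriv uk x < deriv (deriv uj) x / deriv uj x)
    (ξj ξk ηj ηk : ℝ) (hξj : 0 < ξj) (hξk : 0 < ξk) (hηj : 0 ≤ ηj) (hηk : 0 ≤ ηk)
    (p : ℝ → ℝ)
    (hpj : ∀ x ∈ Icc (0:ℝ) Xb, uj x / ξj - ηj / ξj ≤ p x)
    (hpk : ∀ x ∈ Icc (0:ℝ) Xb, uk x / ξk - ηk / ξk ≤ p x) :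
    -- g_{jk} is strictly quasi-concave on [0, X̄]
    (∀ x' ∈ Icc (0:ℝ) Xb, ∀ x'' ∈ Icc (0:ℝ) Xb, x' ≠ x'' → ∀ l ∈ Ioo (0:ℝ) 1,
      min ((uj x' / ξj - ηj / ξj) - (uk x' / ξk - ηk / ξk))
          ((uj x'' / ξj - ηj / ξj) - (uk x'' / ξk - ηk / ξk))
        < (uj (l * x' + (1 - l) * x'') / ξj - ηj / ξj)
          - (uk (l * x' + (1 - l) * x'') / ξk - ηk / ξk)) ∧
    -- consequence: strict price slack for the less risk-averse type in between
    (∀ x' x x'' : ℝ, 0 ≤ x' → x' < x → x < x'' → x'' ≤ Xb →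
      uj x' / ξj - ηj / ξj = p x' → uj x'' / ξj - ηj / ξj = p x'' →
      uk x / ξk - ηk / ξk < p x) := by
  -- differentiability facts
  have hj2' : ContDiff ℝ (1+1) uj := by norm_num; exact hj2
  have hk2' : ContDiff ℝ (1+1) uk := by norm_num; exact hk2
  have hdj : Differentiable ℝ uj := hj2.differentiable two_ne_zero
  have hdk : Differentiable ℝ uk := hk2.differentiable two_ne_zero
  have hdj' : Differentiable ℝ (deriv uj) :=
    (contDiff_succ_iff_deriv.mp hj2').2.2.differentiable one_ne_zero
  have hdk' : Differentiable ℝ (deriv uk) :=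
    (contDiff_succ_iff_deriv.mp hk2').2.2.differentiable one_ne_zero
  set g : ℝ → ℝ := fun x => (uj x / ξj - ηj / ξj) - (uk x / ξk - ηk / ξk) with hgdef
  have hgd : ∀ x : ℝ, HasDerivAt g (deriv uj x / ξj - deriv uk x / ξk) x := by
    intro x
    exact ((((hdj x).hasDerivAt).div_const ξj).sub_const (ηj/ξj)).sub
      ((((hdk x).hasDerivAt).div_const ξk).sub_const (ηk/ξk))
  set φ : ℝ → ℝ := fun x =>
      Real.log (-deriv uj x / ξj) - Real.log (-deriv uk x / ξk) with hφdef
  have hφd : ∀ x : ℝ, 0 ≤ x → HasDerivAt φ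
      (deriv (deriv uj) x / deriv uj x - deriv (deriv uk) x / deriv uk x) x := by
    intro x hx
    have hjx : deriv uj x < 0 := hjder x hx
    have hkx : deriv uk x < 0 := hkder x hx
    have hAj : (0:ℝ) < -deriv uj x / ξj := div_pos (by linarith) hξj
    have hAk : (0:ℝ) < -deriv uk x / ξk := div_pos (by linarith) hξk
    have h1 : HasDerivAt (fun y => Real.log (-deriv uj y / ξj))
        ((-deriv (deriv uj) x / ξj) / (-deriv uj x / ξj)) x :=
      ((((hdj' x).hasDerivAt).neg).div_const ξj).log (ne_of_gt hAj)
    have h2 : HasDerivAt (fun y => Real.log (-deriv uk y / ξk))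
        ((-deriv (deriv uk) x / ξk) / (-deriv uk x / ξk)) x :=
      ((((hdk' x).hasDerivAt).neg).div_const ξk).log (ne_of_gt hAk)
    have e1 : (-deriv (deriv uj) x / ξj) / (-deriv uj x / ξj)
        = deriv (deriv uj) x / deriv uj x := by
      field_simp
    have e2 : (-deriv (deriv uk) x / ξk) / (-deriv uk x / ξk)
        = deriv (deriv uk) x / deriv uk x := by
      field_simp
    have := h1.sub h2
    rw [e1, e2] at this
    exact this
  have hφmono : StrictMonoOn φ (Ici (0:ℝ)) := by
    apply strictMonoOn_of_deriv_pos (convex_Ici 0)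
    · intro x hx
      exact ((hφd x hx).continuousAt).continuousWithinAt
    · intro x hx
      rw [interior_Ici] at hx
      rw [(hφd x (le_of_lt hx)).deriv]
      exact sub_pos.mpr (hcurv x (le_of_lt hx))
  -- sign propagation for g'
  have hsign : ∀ a b : ℝ, 0 ≤ a → a < b →
      deriv uj a / ξj - deriv uk a / ξk ≤ 0 →
      deriv uj b / ξj - deriv uk b / ξk < 0 := by
    intro a b ha hab hDa
    have hb : (0:ℝ) ≤ b := le_trans ha hab.le
    have hAja : (0:ℝ) < -deriv uj a / ξj := div_pos (by linarith [hjder a ha]) hξj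
    have hAka : (0:ℝ) < -deriv uk a / ξk := div_pos (by linarith [hkder a ha]) hξk
    have hAjb : (0:ℝ) < -deriv uj b / ξj := div_pos (by linarith [hjder b hb]) hξj
    have hAkb : (0:ℝ) < -deriv uk b / ξk := div_pos (by linarith [hkder b hb]) hξk
    have hle : -deriv uk a / ξk ≤ -deriv uj a / ξj := by
      rw [neg_div, neg_div]; linarith
    have hφa : 0 ≤ φ a :=
      sub_nonneg.mpr ((Real.log_le_log_iff hAka hAja).mpr hle)
    have hφb : 0 < φ b := lt_of_le_of_lt hφa (hφmono ha hb hab)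
    have : -deriv uk b / ξk < -deriv uj b / ξj :=
      (Real.log_lt_log_iff hAkb hAjb).mp (by linarith [sub_pos.mp hφb])
    rw [neg_div, neg_div] at this
    linarith
  have hgc : Continuous g := by
    fun_prop
  -- strict quasiconcavity core
  have hqc : ∀ a m b : ℝ, 0 ≤ a → a < m → m < b → min (g a) (g b) < g m := by
    intro a m b ha ham hmb
    by_cases hDm : deriv uj m / ξj - deriv uk m / ξk ≤ 0
    · have hanti : StrictAntiOn g (Icc m b) := by
        apply strictAntiOn_of_deriv_neg (convex_Icc m b) (hgc.continuousOn)
        intro y hy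
        rw [interior_Icc] at hy
        rw [(hgd y).deriv]
        exact hsign m y (le_trans ha ham.le) hy.1 hDm
      calc min (g a) (g b) ≤ g b := min_le_right _ _
        _ < g m := hanti ⟨le_rfl, hmb.le⟩ ⟨hmb.le, le_rfl⟩ hmb
    · push_neg at hDm
      have hmono : StrictMonoOn g (Icc a m) := by
        apply strictMonoOn_of_deriv_pos (convex_Icc a m) (hgc.continuousOn)
        intro y hy
        rw [interior_Icc] at hy
        rw [(hgd y).deriv]
        by_contra h
        push_neg at h
        exact absurd (hsign y m (le_trans ha hy.1.le) hy.2 h) (by linarith)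
      calc min (g a) (g b) ≤ g a := min_le_left _ _
        _ < g m := hmono ⟨le_rfl, ham.le⟩ ⟨ham.le, le_rfl⟩ ham
  constructor
  · intro x' hx' x'' hx'' hne l hl
    rcases lt_or_gt_of_ne hne with hlt | hgt
    · have h1 : x' < l * x' + (1 - l) * x'' := by nlinarith [hl.1, hl.2]
      have h2 : l * x' + (1 - l) * x'' < x'' := by nlinarith [hl.1, hl.2]
      exact hqc x' _ x'' hx'.1 h1 h2
    · have h1 : x'' < l * x' + (1 - l) * x'' := by nlinarith [hl.1, hl.2]
      have h2 : l * x' + (1 - l) * x'' < x' := by nlinarith [hl.1, hl.2]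
      rw [min_comm]
      exact hqc x'' _ x' hx''.1 h1 h2
  · intro x' x x'' hx0 h1 h2 h3 heq' heq''
    have hx'mem : x' ∈ Icc (0:ℝ) Xb := ⟨hx0, by linarith⟩
    have hxmem : x ∈ Icc (0:ℝ) Xb := ⟨by linarith, by linarith⟩
    have hx''mem : x'' ∈ Icc (0:ℝ) Xb := ⟨by linarith, h3⟩
    have hg' : 0 ≤ g x' := by
      have := hpk x' hx'mem
      simp only [hgdef]
      linarith [heq']
    have hg'' : 0 ≤ g x'' := by
      have := hpk x'' hx''mem
      simp only [hgdef]
      linarith [heq'']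
    have hmin : 0 ≤ min (g x') (g x'') := le_min hg' hg''
    have hq := hqc x' x x'' hx0 h1 h2
    have hpx := hpj x hxmem
    have hgx : 0 < g x := lt_of_le_of_lt hmin hq
    simp only [hgdef] at hgx
    linarith
end

section
/- Let f be a strictly positive continuous density on [0,X] with CDF F, and suppose F(X) ≥ μ_P + μ_I with μ_P, μ_I > 0. Define X̄ = F⁻¹(μ_P + μ_I), X̄_I = F⁻¹(μ_I), X̄_P = F⁻¹(μ_P). Given a continuous strictly quasi-concave g on [0, X̄] with g(X̄_I) > g(X̄) and g(X̄_P) > g(0), there exists a unique pair 0 < x₁ < x₂ < X̄ satisfying g(x₁) = g(x₂) and F(x₂) − F(x₁) = μ_P. -/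
open Set MeasureTheory intervalIntegral

private lemma qc_mid {g : ℝ → ℝ} {Xb : ℝ}
    (hqc : ∀ a ∈ Icc (0:ℝ) Xb, ∀ b ∈ Icc (0:ℝ) Xb, a ≠ b → ∀ l ∈ Ioo (0:ℝ) 1,
      min (g a) (g b) < g (l * a + (1 - l) * b))
    {a b t : ℝ} (ha : a ∈ Icc (0:ℝ) Xb) (hb : b ∈ Icc (0:ℝ) Xb)
    (h1 : a < t) (h2 : t < b) : min (g a) (g b) < g t := by
  have hab : a < b := h1.trans h2
  have hba : b - a ≠ 0 := by linarith
  have hl : (b - t)/(b - a) ∈ Ioo (0:ℝ) 1 :=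
    ⟨div_pos (by linarith) (by linarith), (div_lt_one (by linarith)).2 (by linarith)⟩
  have ht : (b - t)/(b - a) * a + (1 - (b - t)/(b - a)) * b = t := by
    field_simp
    ring
  have := hqc a ha b hb hab.ne _ hl
  rwa [ht] at this

/-- right of an equal-value pair, g is strictly smaller -/
private lemma qc_right {g : ℝ → ℝ} {Xb : ℝ}
    (hqc : ∀ a ∈ Icc (0:ℝ) Xb, ∀ b ∈ Icc (0:ℝ) Xb, a ≠ b → ∀ l ∈ Ioo (0:ℝ) 1,
      min (g a) (g b) < g (l * a + (1 - l) * b))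
    {a b t : ℝ} (ha : a ∈ Icc (0:ℝ) Xb) (ht : t ∈ Icc (0:ℝ) Xb)
    (h1 : a < b) (h2 : b < t) (heq : g a = g b) : g t < g b := by
  by_contra h
  push_neg at h
  have := qc_mid hqc ha ht h1 h2
  rw [min_lt_iff] at this
  rcases this with h' | h'
  · rw [heq] at h'; exact absurd h' (lt_irrefl _)
  · exact absurd h' (not_lt.2 h)

/-- left of an equal-value pair, g is strictly smaller -/
private lemma qc_left {g : ℝ → ℝ} {Xb : ℝ}
    (hqc : ∀ a ∈ Icc (0:ℝ) Xb, ∀ b ∈ Icc (0:ℝ) Xb, a ≠ b → ∀ l ∈ Ioo (0:ℝ) 1,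
      min (g a) (g b) < g (l * a + (1 - l) * b))
    {a b t : ℝ} (ht : t ∈ Icc (0:ℝ) Xb) (hb : b ∈ Icc (0:ℝ) Xb)
    (h1 : t < a) (h2 : a < b) (heq : g a = g b) : g t < g a := by
  by_contra h
  push_neg at h
  have := qc_mid hqc ht hb h1 h2
  rw [min_lt_iff] at this
  rcases this with h' | h'
  · exact absurd h' (not_lt.2 h)
  · rw [heq] at h'; exact absurd h' (lt_irrefl _)

/-- existence and uniqueness of the IPI interval boundaries in the
first-best allocation: given a continuous strictly quasi-concave `g` on `[0, X̄]` with
`g(X̄_I) > g(X̄)` and `g(X̄_P) > g(0)`, there is a unique pair `0 < x₁ < x₂ < X̄` with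
`g(x₁) = g(x₂)` and `F(x₂) − F(x₁) = μ_P`. -/
theorem stmt17 (X : ℝ) (hX : 0 < X)
    (f : ℝ → ℝ) (hf : ContinuousOn f (Icc 0 X)) (hfpos : ∀ x ∈ Icc (0:ℝ) X, 0 < f x)
    (μP μI : ℝ) (hμP : 0 < μP) (hμI : 0 < μI)
    (F : ℝ → ℝ) (hF : ∀ y ∈ Icc (0:ℝ) X, F y = ∫ t in (0:ℝ)..y, f t)
    (hsup : μP + μI ≤ F X)
    (Xb XbI XbP : ℝ)
    (hXb : Xb ∈ Icc (0:ℝ) X) (hXbI : XbI ∈ Icc (0:ℝ) X) (hXbP : XbP ∈ Icc (0:ℝ) X)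
    (hFXb : F Xb = μP + μI) (hFXbI : F XbI = μI) (hFXbP : F XbP = μP)
    (g : ℝ → ℝ) (hg : ContinuousOn g (Icc 0 Xb))
    (hqc : ∀ a ∈ Icc (0:ℝ) Xb, ∀ b ∈ Icc (0:ℝ) Xb, a ≠ b → ∀ l ∈ Ioo (0:ℝ) 1,
      min (g a) (g b) < g (l * a + (1 - l) * b))
    (h1 : g Xb < g XbI) (h2 : g 0 < g XbP) :
    ∃! p : ℝ × ℝ, 0 < p.1 ∧ p.1 < p.2 ∧ p.2 < Xb ∧
      g p.1 = g p.2 ∧ F p.2 - F p.1 = μP := by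
  -- the clamp function
  set cl : ℝ → ℝ := fun y => max 0 (min y X) with hcl
  have hclval : ∀ y : ℝ, (y ≤ 0 ∧ cl y = 0) ∨ (0 ≤ y ∧ y ≤ X ∧ cl y = y) ∨
      (X ≤ y ∧ cl y = X) := by
    intro y
    rcases le_total y 0 with h | h
    · exact Or.inl ⟨h, by simp [hcl, max_eq_left ((min_le_left y X).trans h)]⟩
    · rcases le_total y X with h' | h'
      · exact Or.inr (Or.inl ⟨h, h', by simp [hcl, min_eq_left h', max_eq_right h]⟩)
      · exact Or.inr (Or.inr ⟨h', by simp [hcl, min_eq_right h', max_eq_right hX.le]⟩)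
  have hclmem : ∀ y, cl y ∈ Icc (0:ℝ) X := fun y =>
    ⟨le_max_left _ _, max_le hX.le (min_le_right _ _)⟩
  have hcleq : ∀ y ∈ Icc (0:ℝ) X, cl y = y := fun y hy => by
    simp [hcl, min_eq_left hy.2, max_eq_right hy.1]
  have hclmono : Monotone cl := monotone_const.max (monotone_id.min monotone_const)
  have hclcont : Continuous cl := continuous_const.max (continuous_id.min continuous_const)
  -- interval integrability
  have hint : ∀ c d, c ∈ Icc (0:ℝ) X → d ∈ Icc (0:ℝ) X → IntervalIntegrable f volume c d := by
    intro c d hc hd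
    exact (hf.mono (by
      rw [uIcc_eq_union]
      exact union_subset (Icc_subset_Icc hc.1 hd.2) (Icc_subset_Icc hd.1 hc.2))).intervalIntegrable
  -- strict monotonicity of the primitive
  have h0X : (0:ℝ) ∈ Icc (0:ℝ) X := ⟨le_refl _, hX.le⟩
  have hprim_lt : ∀ c d, c ∈ Icc (0:ℝ) X → d ∈ Icc (0:ℝ) X → c < d →
      (∫ t in (0:ℝ)..c, f t) < ∫ t in (0:ℝ)..d, f t := by
    intro c d hc hd hcd
    have key : (∫ t in (0:ℝ)..c, f t) + (∫ t in c..d, f t) = ∫ t in (0:ℝ)..d, f t :=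
      integral_add_adjacent_intervals (hint 0 c h0X hc) (hint c d hc hd)
    have pos : 0 < ∫ t in c..d, f t :=
      intervalIntegral_pos_of_pos_on (hint c d hc hd)
        (fun x hx => hfpos x ⟨hc.1.trans hx.1.le, hx.2.le.trans hd.2⟩) hcd
    linarith
  -- the extended CDF
  set Fe : ℝ → ℝ := fun y => (∫ t in (0:ℝ)..(cl y), f t) + (y - cl y) with hFe
  have hFeF : ∀ y ∈ Icc (0:ℝ) X, Fe y = F y := by
    intro y hy
    rw [hFe]; simp only [hcleq y hy, sub_self, add_zero]
    exact (hF y hy).symm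
  -- B := y - cl y is monotone
  have hBmono : Monotone (fun y => y - cl y) := by
    intro y z hyz
    rcases hclval y with ⟨hy, hy'⟩ | ⟨hy0, hyX, hy'⟩ | ⟨hy, hy'⟩ <;>
      rcases hclval z with ⟨hz, hz'⟩ | ⟨hz0, hzX, hz'⟩ | ⟨hz, hz'⟩ <;>
      simp only [hy', hz'] <;> linarith
  have hFemono : StrictMono Fe := by
    intro y z hyz
    rcases eq_or_lt_of_le (hclmono hyz.le) with h | h
    · rw [hFe]
      simp only [h]
      have h2 : y - cl y < z - cl z := by rw [← h]; linarith
      linarith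
    · exact add_lt_add_of_lt_of_le (hprim_lt _ _ (hclmem y) (hclmem z) h) (hBmono hyz.le)
  have hFecont : Continuous Fe := by
    have hprimcont : ContinuousOn (fun x => ∫ t in (0:ℝ)..x, f t) (Icc 0 X) := by
      have := continuousOn_primitive_interval (μ := volume) (a := 0) (b := X) (f := f)
        (by rw [uIcc_of_le hX.le]; exact hf.integrableOn_Icc)
      rwa [uIcc_of_le hX.le] at this
    exact (hprimcont.comp_continuous hclcont hclmem).add (continuous_id.sub hclcont)
  have hFesurj : Function.Surjective Fe := by
    apply hFecont.surjective
    · apply Filter.Tendsto.congr' (f₁ := fun y => y + ((∫ t in (0:ℝ)..X, f t) - X))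
      · filter_upwards [Filter.eventually_ge_atTop X] with y hy
        have hy' : cl y = X := by
          rcases hclval y with ⟨h, h'⟩ | ⟨h0, hX', h'⟩ | ⟨h, h'⟩
          · linarith
          · rw [h']; linarith
          · exact h'
        rw [hFe]; simp only [hy']; ring
      · exact Filter.tendsto_atTop_add_const_right _ _ Filter.tendsto_id
    · apply Filter.Tendsto.congr' (f₁ := fun y => y)
      · filter_upwards [Filter.eventually_le_atBot (0:ℝ)] with y hy
        have hy' : cl y = 0 := by
          rcases hclval y with ⟨h, h'⟩ | ⟨h0, hX', h'⟩ | ⟨h, h'⟩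
          · exact h'
          · rw [h']; linarith
          · linarith
        rw [hFe]; simp [hy']
      · exact Filter.tendsto_id
  set e : ℝ ≃o ℝ := StrictMono.orderIsoOfSurjective Fe hFemono hFesurj with he
  have heapp : ∀ y, e y = Fe y := fun y => rfl
  -- basic values
  have hFe0 : Fe 0 = 0 := by
    rw [hFe]; simp [hcleq 0 h0X]
  have hFeXb : Fe Xb = μP + μI := by rw [hFeF Xb hXb]; exact hFXb
  have hFeXbI : Fe XbI = μI := by rw [hFeF XbI hXbI]; exact hFXbI
  have hFeXbP : Fe XbP = μP := by rw [hFeF XbP hXbP]; exact hFXbP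
  have hXbI_pos : 0 < XbI := hFemono.lt_iff_lt.1 (by rw [hFe0, hFeXbI]; exact hμI)
  have hXbI_lt : XbI < Xb := hFemono.lt_iff_lt.1 (by rw [hFeXbI, hFeXb]; linarith)
  have hXbP_pos : 0 < XbP := hFemono.lt_iff_lt.1 (by rw [hFe0, hFeXbP]; exact hμP)
  -- the shift map ψ
  set ψ : ℝ → ℝ := fun x => e.symm (Fe x + μP) with hψ
  have hψFe : ∀ x, Fe (ψ x) = Fe x + μP := by
    intro x
    have := e.apply_symm_apply (Fe x + μP)
    rwa [heapp] at this
  have hψcont : Continuous ψ := e.symm.continuous.comp (hFecont.add continuous_const)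
  have hψmaps : ∀ x ∈ Icc (0:ℝ) XbI, ψ x ∈ Icc XbP Xb := by
    intro x hx
    constructor
    · apply hFemono.le_iff_le.1
      rw [hψFe, hFeXbP]
      have : Fe 0 ≤ Fe x := hFemono.monotone hx.1
      rw [hFe0] at this; linarith
    · apply hFemono.le_iff_le.1
      rw [hψFe, hFeXb]
      have : Fe x ≤ Fe XbI := hFemono.monotone hx.2
      rw [hFeXbI] at this; linarith
  -- the difference function
  set h : ℝ → ℝ := fun x => g (ψ x) - g x with hh
  have hhcont : ContinuousOn h (Icc 0 XbI) := by
    apply ContinuousOn.sub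
    · apply (hg.comp hψcont.continuousOn)
      intro x hx
      have := hψmaps x hx
      exact ⟨hXbP_pos.le.trans this.1, this.2⟩
    · exact hg.mono (Icc_subset_Icc le_rfl hXbI_lt.le)
  have hψ0 : ψ 0 = XbP := by
    have : Fe (ψ 0) = Fe XbP := by rw [hψFe, hFe0, hFeXbP, zero_add]
    exact hFemono.injective this
  have hψXbI : ψ XbI = Xb := by
    have : Fe (ψ XbI) = Fe Xb := by rw [hψFe, hFeXbI, hFeXb]; ring
    exact hFemono.injective this
  have hh0 : 0 < h 0 := by rw [hh]; simp only [hψ0]; linarith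
  have hhXbI : h XbI < 0 := by rw [hh]; simp only [hψXbI]; linarith
  -- IVT
  obtain ⟨x₁, hx₁mem, hx₁⟩ : ∃ x₁ ∈ Ioo (0:ℝ) XbI, h x₁ = 0 := by
    obtain ⟨x, hx, hx'⟩ := intermediate_value_Ioo' hXbI_pos.le hhcont ⟨hhXbI, hh0⟩
    exact ⟨x, hx, hx'⟩
  set x₂ : ℝ := ψ x₁ with hx₂def
  have hFex₂ : Fe x₂ = Fe x₁ + μP := hψFe x₁
  have hx₁x₂ : x₁ < x₂ := hFemono.lt_iff_lt.1 (by rw [hFex₂]; linarith)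
  have hx₂Xb : x₂ < Xb := by
    apply hFemono.lt_iff_lt.1
    rw [hFex₂, hFeXb]
    have : Fe x₁ < Fe XbI := hFemono hx₁mem.2
    rw [hFeXbI] at this; linarith
  have hgx : g x₁ = g x₂ := by
    have h' := hx₁
    rw [hh] at h'
    have := sub_eq_zero.1 h'
    rw [hx₂def]; linarith
  have hXbX : Xb ≤ X := hXb.2
  have hmemX : ∀ z : ℝ, 0 < z → z < Xb → z ∈ Icc (0:ℝ) X :=
    fun z hz hz' => ⟨hz.le, hz'.le.trans hXbX⟩
  have hFx : F x₂ - F x₁ = μP := by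
    rw [← hFeF x₁ (hmemX x₁ hx₁mem.1 (hx₁x₂.trans hx₂Xb)),
        ← hFeF x₂ (hmemX x₂ (hx₁mem.1.trans hx₁x₂) hx₂Xb), hFex₂]
    ring
  -- solutions determine Fe relation
  have hsolFe : ∀ a₁ a₂ : ℝ, 0 < a₁ → a₁ < a₂ → a₂ < Xb → F a₂ - F a₁ = μP →
      Fe a₂ = Fe a₁ + μP := by
    intro a₁ a₂ ha1 ha12 ha2 haF
    rw [hFeF a₁ (hmemX a₁ ha1 (ha12.trans ha2)), hFeF a₂ (hmemX a₂ (ha1.trans ha12) ha2)]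
    linarith
  -- uniqueness core
  have huniq : ∀ a₁ a₂ b₁ b₂ : ℝ,
      (0 < a₁ ∧ a₁ < a₂ ∧ a₂ < Xb ∧ g a₁ = g a₂ ∧ F a₂ - F a₁ = μP) →
      (0 < b₁ ∧ b₁ < b₂ ∧ b₂ < Xb ∧ g b₁ = g b₂ ∧ F b₂ - F b₁ = μP) →
      a₁ < b₁ → False := by
    rintro a₁ a₂ b₁ b₂ ⟨hp1, hp12, hp2, hpg, hpF⟩ ⟨hq1, hq12, hq2, hqg, hqF⟩ hlt
    have hFp := hsolFe a₁ a₂ hp1 hp12 hp2 hpF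
    have hFq := hsolFe b₁ b₂ hq1 hq12 hq2 hqF
    have h22 : a₂ < b₂ := hFemono.lt_iff_lt.1 (by
      rw [hFp, hFq]
      exact add_lt_add_of_lt_of_le (hFemono hlt) le_rfl)
    have ma1 : a₁ ∈ Icc (0:ℝ) Xb := ⟨hp1.le, (hp12.trans hp2).le⟩
    have ma2 : a₂ ∈ Icc (0:ℝ) Xb := ⟨(hp1.trans hp12).le, hp2.le⟩
    have mb1 : b₁ ∈ Icc (0:ℝ) Xb := ⟨hq1.le, (hq12.trans hq2).le⟩
    have mb2 : b₂ ∈ Icc (0:ℝ) Xb := ⟨(hq1.trans hq12).le, hq2.le⟩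
    rcases lt_trichotomy b₁ a₂ with hb | hb | hb
    · have H1 := qc_mid hqc ma1 ma2 hlt hb
      rw [hpg, min_self] at H1
      have H2 := qc_mid hqc mb1 mb2 hb h22
      rw [hqg, min_self] at H2
      linarith
    · subst hb
      have H := qc_mid hqc ma1 mb2 hp12 hq12
      rw [hpg, ← hqg, min_self] at H
      exact absurd H (lt_irrefl _)
    · have H1 : g b₁ < g a₂ := qc_right hqc ma1 mb1 hp12 hb hpg
      have H2 : g a₂ < g b₁ := qc_left hqc ma2 mb2 hb hq12 hqg
      linarith
  refine ⟨(x₁, x₂), ⟨hx₁mem.1, hx₁x₂, hx₂Xb, hgx, hFx⟩, ?_⟩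
  rintro ⟨y₁, y₂⟩ ⟨hy1, hy12, hy2, hyg, hyF⟩
  simp only at hy1 hy12 hy2 hyg hyF ⊢
  rcases lt_trichotomy y₁ x₁ with hc | hc | hc
  · exact absurd (huniq y₁ y₂ x₁ x₂ ⟨hy1, hy12, hy2, hyg, hyF⟩
      ⟨hx₁mem.1, hx₁x₂, hx₂Xb, hgx, hFx⟩ hc) (fun h => h)
  · have : y₂ = x₂ := by
      apply hFemono.injective
      rw [hsolFe y₁ y₂ hy1 hy12 hy2 hyF, hFex₂, hc]
    exact Prod.ext hc this
  · exact absurd (huniq x₁ x₂ y₁ y₂ ⟨hx₁mem.1, hx₁x₂, hx₂Xb, hgx, hFx⟩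
      ⟨hy1, hy12, hy2, hyg, hyF⟩ hc) (fun h => h)
end

section
/- Let u : [0,∞) → (0,∞) be continuous, strictly decreasing with lim_{x→∞} u(x) = 0, extended by u(⋄) = 0. For measurable B ⊂ (x₂, X] with q_I(B) > 0 and A ⊂ [x₂, X] with A ◁ B and remaining supply (f − μ_I q_I)(A) > 0, there exists γ̄ ∈ (0,1) such that the P-agent is indifferent between the lottery γ̄·((f − μ_I q_I)|A) + (1−γ̄)·δ_⋄ and the lottery q_I | B; moreover an I-agent (strictly less risk averse) strictly prefers the former lottery: V_I(γ̄·((f − μ_I q_I)|A) + (1−γ̄)·δ_⋄) > V_I(q_I | B). -/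
open Set MeasureTheory Filter

lemma stmt18_int_mul (u w : ℝ → ℝ) (S : Set ℝ) (hS : MeasurableSet S)
    (hu : AEMeasurable u (volume.restrict S)) (hw : IntegrableOn w S)
    (C : ℝ) (hbound : ∀ x ∈ S, |u x| ≤ C) (hw0 : ∀ x ∈ S, 0 ≤ w x) :
    IntegrableOn (fun x => u x * w x) S := by
  refine Integrable.mono' (hw.const_mul C) ?_ ?_
  · exact (hu.mul hw.aemeasurable).aestronglyMeasurable
  · filter_upwards [ae_restrict_mem hS] with x hx
    rw [norm_mul]
    calc ‖u x‖ * ‖w x‖ ≤ C * ‖w x‖ :=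
          mul_le_mul_of_nonneg_right (hbound x hx) (norm_nonneg _)
      _ = C * w x := by rw [Real.norm_eq_abs, abs_of_nonneg (hw0 x hx)]

lemma stmt18_pos_int (v w : ℝ → ℝ) (A : Set ℝ) (hA : MeasurableSet A) (c : ℝ)
    (hv0 : ∀ x ∈ A, 0 ≤ v x) (hvpos : ∀ x ∈ A, x ≠ c → 0 < v x)
    (hw0 : ∀ x ∈ A, 0 ≤ w x)
    (hwint : IntegrableOn w A)
    (hvwint : IntegrableOn (fun x => v x * w x) A)
    (hwpos : 0 < ∫ x in A, w x) :
    0 < ∫ x in A, v x * w x := by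
  have h0 : 0 < volume (Function.support w ∩ A) := by
    rw [← setIntegral_pos_iff_support_of_nonneg_ae ?_ hwint]
    · exact hwpos
    · filter_upwards [ae_restrict_mem hA] with x hx using hw0 x hx
  have hsub : (Function.support w ∩ A) \ {c} ⊆
      Function.support (fun x => v x * w x) ∩ A := by
    rintro x ⟨⟨hxw, hxA⟩, hxc⟩
    refine ⟨?_, hxA⟩
    simp only [Function.mem_support] at hxw ⊢
    exact mul_ne_zero (ne_of_gt (hvpos x hxA (by simpa using hxc))) hxw
  have h1 : 0 < volume (Function.support (fun x => v x * w x) ∩ A) := by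
    refine lt_of_lt_of_le ?_ (measure_mono hsub)
    rwa [measure_diff_null (measure_singleton c)]
  rw [setIntegral_pos_iff_support_of_nonneg_ae ?_ hvwint]
  · exact h1
  · filter_upwards [ae_restrict_mem hA] with x hx using mul_nonneg (hv0 x hx) (hw0 x hx)

/-- a step in Lemma 4: with remaining supply `f − μ_I q_I` on `A` and
`q_I`-mass on `B`, where `A ◁ B` within `[x₂, X]`, there is `γ̄ ∈ (0,1)` such that the
`P`-agent is indifferent between the lottery `γ̄·((f − μ_I q_I)|A) + (1−γ̄)·δ_⋄` and the
lottery `q_I | B`, while the strictly less risk-averse `I`-agent strictly prefers the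
former. Lottery values are the weighted averages of utilities, with `u(⋄) = 0`. -/
theorem stmt18 (X x₂ : ℝ) (hx₂ : 0 ≤ x₂) (hX : x₂ < X)
    (uP uI : ℝ → ℝ)
    (hPc : ContinuousOn uP (Ici 0)) (hIc : ContinuousOn uI (Ici 0))
    (hPanti : StrictAntiOn uP (Ici 0)) (hIanti : StrictAntiOn uI (Ici 0))
    (hPpos : ∀ x : ℝ, 0 ≤ x → 0 < uP x) (hIpos : ∀ x : ℝ, 0 ≤ x → 0 < uI x)
    (hPlim : Tendsto uP atTop (nhds 0)) (hIlim : Tendsto uI atTop (nhds 0))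
    (hrisk : ∀ a x : ℝ, 0 ≤ a → a < x → ∀ γ : ℝ, 0 < γ → γ < 1 →
      γ * uP a = uP x → uI x < γ * uI a)
    (f qI : ℝ → ℝ) (hfmeas : Measurable f) (hqImeas : Measurable qI)
    (μI : ℝ) (hμI : 0 < μI)
    (hqI0 : ∀ x, 0 ≤ qI x)
    (hrem : ∀ x ∈ Icc x₂ X, 0 ≤ f x - μI * qI x)
    (A B : Set ℝ) (hA : MeasurableSet A) (hB : MeasurableSet B)
    (hAsub : A ⊆ Icc x₂ X) (hBsub : B ⊆ Ioc x₂ X)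
    (hAB : ∀ a ∈ A, ∀ b ∈ B, a < b)
    (hApos : 0 < ∫ x in A, (f x - μI * qI x))
    (hBpos : 0 < ∫ x in B, qI x) :
    ∃ γ ∈ Ioo (0:ℝ) 1,
      γ * ((∫ x in A, uP x * (f x - μI * qI x)) / (∫ x in A, (f x - μI * qI x)))
          = (∫ x in B, uP x * qI x) / (∫ x in B, qI x) ∧
      (∫ x in B, uI x * qI x) / (∫ x in B, qI x)
          < γ * ((∫ x in A, uI x * (f x - μI * qI x)) / (∫ x in A, (f x - μI * qI x))) := by
  set w : ℝ → ℝ := fun x => f x - μI * qI x with hwdef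
  have hAIci : A ⊆ Ici (0:ℝ) := fun x hx => le_trans hx₂ (hAsub hx).1
  have hBIci : B ⊆ Ici (0:ℝ) := fun x hx => le_trans hx₂ (hBsub hx).1.le
  have hA0 : ∀ x ∈ A, (0:ℝ) ≤ x := fun x hx => hAIci hx
  have hB0 : ∀ x ∈ B, (0:ℝ) ≤ x := fun x hx => hBIci hx
  -- nonemptiness of A
  have hAne : A.Nonempty := by
    by_contra h
    rw [not_nonempty_iff_eq_empty] at h
    rw [h] at hApos
    simp at hApos
  obtain ⟨a₀, ha₀⟩ := hAne
  have hbdd : BddAbove A := ⟨X, fun a ha => (hAsub ha).2⟩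
  set c := sSup A with hcdef
  have hcA : ∀ a ∈ A, a ≤ c := fun a ha => le_csSup hbdd ha
  have hcX : c ≤ X := csSup_le ⟨a₀, ha₀⟩ fun a ha => (hAsub ha).2
  have hcx2 : x₂ ≤ c := le_trans (hAsub ha₀).1 (hcA a₀ ha₀)
  have hc0 : (0:ℝ) ≤ c := le_trans hx₂ hcx2
  have hcB : ∀ b ∈ B, c ≤ b := fun b hb =>
    csSup_le ⟨a₀, ha₀⟩ fun a ha => (hAB a ha b hb).le
  have huPc : 0 < uP c := hPpos c hc0
  have huIc : 0 < uI c := hIpos c hc0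
  -- integrability of weights
  have hwA : IntegrableOn w A := by
    by_contra h
    rw [MeasureTheory.integral_undef h] at hApos
    exact lt_irrefl 0 hApos
  have hqB : IntegrableOn qI B := by
    by_contra h
    rw [MeasureTheory.integral_undef h] at hBpos
    exact lt_irrefl 0 hBpos
  have hw0 : ∀ x ∈ A, 0 ≤ w x := fun x hx => hrem x (hAsub hx)
  -- measurability
  have haemPA : AEMeasurable uP (volume.restrict A) :=
    (hPc.mono hAIci).aemeasurable hA
  have haemIA : AEMeasurable uI (volume.restrict A) :=
    (hIc.mono hAIci).aemeasurable hA
  have haemPB : AEMeasurable uP (volume.restrict B) :=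
    (hPc.mono hBIci).aemeasurable hB
  have haemIB : AEMeasurable uI (volume.restrict B) :=
    (hIc.mono hBIci).aemeasurable hB
  -- bounds: on [0,∞), for x ≥ 0 we have uP x ≤ uP 0
  have hPbddA : ∀ x ∈ A, |uP x| ≤ uP 0 := by
    intro x hx
    rw [abs_of_pos (hPpos x (hA0 x hx))]
    rcases eq_or_lt_of_le (hA0 x hx) with h | h
    · rw [← h]
    · exact (hPanti (self_mem_Ici) (hAIci hx) h).le
  have hIbddA : ∀ x ∈ A, |uI x| ≤ uI 0 := by
    intro x hx
    rw [abs_of_pos (hIpos x (hA0 x hx))]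
    rcases eq_or_lt_of_le (hA0 x hx) with h | h
    · rw [← h]
    · exact (hIanti (self_mem_Ici) (hAIci hx) h).le
  have hPbddB : ∀ x ∈ B, |uP x| ≤ uP 0 := by
    intro x hx
    rw [abs_of_pos (hPpos x (hB0 x hx))]
    rcases eq_or_lt_of_le (hB0 x hx) with h | h
    · rw [← h]
    · exact (hPanti (self_mem_Ici) (hBIci hx) h).le
  have hIbddB : ∀ x ∈ B, |uI x| ≤ uI 0 := by
    intro x hx
    rw [abs_of_pos (hIpos x (hB0 x hx))]
    rcases eq_or_lt_of_le (hB0 x hx) with h | h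
    · rw [← h]
    · exact (hIanti (self_mem_Ici) (hBIci hx) h).le
  have hq0B : ∀ x ∈ B, 0 ≤ qI x := fun x _ => hqI0 x
  -- integrability of products
  have intPA : IntegrableOn (fun x => uP x * w x) A :=
    stmt18_int_mul uP w A hA haemPA hwA (uP 0) hPbddA hw0
  have intIA : IntegrableOn (fun x => uI x * w x) A :=
    stmt18_int_mul uI w A hA haemIA hwA (uI 0) hIbddA hw0
  have intPB : IntegrableOn (fun x => uP x * qI x) B :=
    stmt18_int_mul uP qI B hB haemPB hqB (uP 0) hPbddB hq0B
  have intIB : IntegrableOn (fun x => uI x * qI x) B :=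
    stmt18_int_mul uI qI B hB haemIB hqB (uI 0) hIbddB hq0B
  -- abbreviations for the six integrals
  set WA := ∫ x in A, w x with hWAdef
  set WB := ∫ x in B, qI x with hWBdef
  set PA := ∫ x in A, uP x * w x with hPAdef
  set IA := ∫ x in A, uI x * w x with hIAdef
  set PB := ∫ x in B, uP x * qI x with hPBdef
  set IB := ∫ x in B, uI x * qI x with hIBdef
  have hWA : 0 < WA := hApos
  have hWB : 0 < WB := hBpos
  -- pointwise strict comparisons on A
  have hstrictP : ∀ a ∈ A, a ≠ c → 0 < uP a - uP c := by
    intro a ha hne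
    have hac : a < c := lt_of_le_of_ne (hcA a ha) hne
    have := hPanti (hAIci ha) (mem_Ici.mpr hc0) hac
    linarith
  have hstrictI : ∀ a ∈ A, a ≠ c → 0 < uI a * uP c - uI c * uP a := by
    intro a ha hne
    have ha0 : (0:ℝ) ≤ a := hA0 a ha
    have hac : a < c := lt_of_le_of_ne (hcA a ha) hne
    have hPa : 0 < uP a := hPpos a ha0
    have hPlt : uP c < uP a := hPanti (hAIci ha) (mem_Ici.mpr hc0) hac
    have h := hrisk a c ha0 hac (uP c / uP a) (div_pos huPc hPa)
      ((div_lt_one hPa).mpr hPlt) (div_mul_cancel₀ _ (ne_of_gt hPa))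
    rw [div_mul_eq_mul_div, lt_div_iff₀ hPa] at h
    nlinarith
  -- pointwise comparisons on B
  have hBP : ∀ b ∈ B, uP b ≤ uP c := by
    intro b hb
    rcases eq_or_lt_of_le (hcB b hb) with h | h
    · rw [h]
    · exact (hPanti (mem_Ici.mpr hc0) (hBIci hb) h).le
  have hBr : ∀ b ∈ B, uI b * uP c ≤ uI c * uP b := by
    intro b hb
    rcases eq_or_lt_of_le (hcB b hb) with h | h
    · rw [← h]
    · have hPb : 0 < uP b := hPpos b (hB0 b hb)
      have hPlt : uP b < uP c := hPanti (mem_Ici.mpr hc0) (hBIci hb) h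
      have hh := hrisk c b hc0 h (uP b / uP c) (div_pos hPb huPc)
        ((div_lt_one huPc).mpr hPlt) (div_mul_cancel₀ _ (ne_of_gt huPc))
      rw [div_mul_eq_mul_div, lt_div_iff₀ huPc] at hh
      nlinarith
  -- strict integral inequality on A for uP
  have h1 : uP c * WA < PA := by
    have e1 : 0 < ∫ x in A, (uP x - uP c) * w x := by
      refine stmt18_pos_int (fun x => uP x - uP c) w A hA c
        (fun x hx => ?_) hstrictP hw0 hwA ?_ hWA
      · rcases eq_or_ne x c with h | h
        · simp [h]
        · exact (hstrictP x hx h).le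
      · have heq : (fun x => (uP x - uP c) * w x)
            = fun x => uP x * w x - uP c * w x := by funext x; ring
        rw [heq]
        exact intPA.sub (hwA.const_mul _)
    have e2 : ∫ x in A, (uP x - uP c) * w x = PA - uP c * WA := by
      have heq : (fun x => (uP x - uP c) * w x)
          = fun x => uP x * w x - uP c * w x := by funext x; ring
      rw [heq, integral_sub intPA (hwA.const_mul _), integral_const_mul]
    rw [e2] at e1
    linarith
  have hPApos : 0 < PA := lt_trans (mul_pos huPc hWA) h1
  -- strict integral inequality on A for the risk ratio
  have h4 : uI c * PA < uP c * IA := by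
    have e1 : 0 < ∫ x in A, (uI x * uP c - uI c * uP x) * w x := by
      refine stmt18_pos_int (fun x => uI x * uP c - uI c * uP x) w A hA c
        (fun x hx => ?_) hstrictI hw0 hwA ?_ hWA
      · rcases eq_or_ne x c with h | h
        · simp [h]
        · exact (hstrictI x hx h).le
      · have heq : (fun x => (uI x * uP c - uI c * uP x) * w x)
            = fun x => uP c * (uI x * w x) - uI c * (uP x * w x) := by funext x; ring
        rw [heq]
        exact (intIA.const_mul _).sub (intPA.const_mul _)
    have e2 : ∫ x in A, (uI x * uP c - uI c * uP x) * w x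
        = uP c * IA - uI c * PA := by
      have heq : (fun x => (uI x * uP c - uI c * uP x) * w x)
          = fun x => uP c * (uI x * w x) - uI c * (uP x * w x) := by funext x; ring
      rw [heq, integral_sub (intIA.const_mul _) (intPA.const_mul _),
        integral_const_mul, integral_const_mul]
    rw [e2] at e1
    linarith
  -- integral inequalities on B
  have h2 : PB ≤ uP c * WB := by
    have hle := setIntegral_mono_on intPB (hqB.const_mul (uP c)) hB
      (fun x hx => mul_le_mul_of_nonneg_right (hBP x hx) (hqI0 x))
    rwa [integral_const_mul] at hle
  have h5 : uP c * IB ≤ uI c * PB := by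
    have hle := setIntegral_mono_on (intIB.const_mul (uP c)) (intPB.const_mul (uI c)) hB
      (fun x hx => by
        have h1 := hBr x hx
        have hq := hqI0 x
        nlinarith)
    rwa [integral_const_mul, integral_const_mul] at hle
  have hPBpos : 0 < PB :=
    stmt18_pos_int uP qI B hB x₂ (fun x hx => (hPpos x (hB0 x hx)).le)
      (fun x hx _ => hPpos x (hB0 x hx)) hq0B hqB intPB hWB
  -- define γ and conclude
  refine ⟨(PB / WB) / (PA / WA), ⟨?_, ?_⟩, ?_, ?_⟩
  · exact div_pos (div_pos hPBpos hWB) (div_pos hPApos hWA)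
  · rw [div_lt_one (div_pos hPApos hWA)]
    calc PB / WB ≤ uP c := (div_le_iff₀ hWB).mpr (by linarith)
      _ < PA / WA := (lt_div_iff₀ hWA).mpr (by linarith)
  · exact div_mul_cancel₀ _ (ne_of_gt (div_pos hPApos hWA))
  · have key : IB * PA < PB * IA := by nlinarith
    have hq : (PB / WB) / (PA / WA) * (IA / WA) = (PB * IA) / (WB * PA) := by
      field_simp
    rw [hq, div_lt_div_iff₀ hWB (mul_pos hWB hPApos)]
    nlinarith
end

section
/- Let u_1, ..., u_N : [0,X] → ℝ be measurable functions that are 'linearly independent over sets of positive measure': for any λ_0, λ_1, ..., λ_N ∈ ℝ not all zero among λ_1,...,λ_N, the set {x ∈ [0,X] : Σ_{j=1}^N λ_j u_j(x) = λ_0} has Lebesgue measure zero. Let A ⊆ [0,X] have positive Lebesgue measure and partition A into N+1 disjoint subsets A_1,...,A_{N+1} of positive measure. Then one can choose measurable B_i ⊆ A_i, i = 1,...,N+1, such that the N+1 vectors ζ^0 = (ν(B_1),...,ν(B_{N+1})) and ζ^l = (∫_{B_1} u_l dx, ..., ∫_{B_{N+1}} u_l dx) for l = 1,...,N contain some N+1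 of them linearly independent — in particular, for any distinguished index k ∈ {1,...,N}, there is a unit vector e ∈ ℝ^{N+1} with ζ^k · e > 0 and ζ^i · e = 0 for all i ∈ {0,...,N} \ {k}. -/
open Set MeasureTheory

namespace Stmt19Aux

variable {N : ℕ}

noncomputable def mvec (u : Fin N → ℝ → ℝ) (B : Set ℝ) : Fin (N+1) → ℝ :=
  Fin.cons (volume B).toReal (fun l => ∫ x in B, u l x)

lemma key {X : ℝ} {u : Fin N → ℝ → ℝ} (humeas : ∀ l, Measurable (u l))
    (hindep : ∀ (lam0 : ℝ) (lam : Fin N → ℝ), lam ≠ 0 →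
      volume {x ∈ Icc (0:ℝ) X | ∑ j, lam j * u j x = lam0} = 0)
    {S : Set ℝ} (hS : MeasurableSet S) (hSsub : S ⊆ Icc 0 X) (hSpos : 0 < volume S)
    (W : Submodule ℝ (Fin (N+1) → ℝ)) (hW : W ≠ ⊤) :
    ∃ B : Set ℝ, B ⊆ S ∧ MeasurableSet B ∧ mvec u B ∉ W := by
  classical
  set g : ℝ → ℝ := fun x => ∑ l, |u l x| with hg
  have hgmeas : Measurable g := Finset.measurable_sum _ (fun l _ => (humeas l).abs)
  obtain ⟨n, hn⟩ : ∃ n : ℕ, 0 < volume (S ∩ {x | g x ≤ n}) := by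
    by_contra h
    push_neg at h
    simp only [le_zero_iff] at h
    have hcover : S ⊆ ⋃ n : ℕ, S ∩ {x | g x ≤ n} := by
      intro x hx
      obtain ⟨n, hn⟩ := exists_nat_ge (g x)
      exact mem_iUnion.2 ⟨n, hx, hn⟩
    exact absurd (measure_mono_null hcover (measure_iUnion_null h)) hSpos.ne'
  set S' := S ∩ {x | g x ≤ n} with hS'def
  have hS'meas : MeasurableSet S' := hS.inter (measurableSet_le hgmeas measurable_const)
  have hS'sub : S' ⊆ S := inter_subset_left
  have hS'fin : volume S' ≠ ⊤ :=
    (lt_of_le_of_lt (measure_mono (hS'sub.trans hSsub)) measure_Icc_lt_top).ne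
  have hint : ∀ l, IntegrableOn (u l) S' := by
    intro l
    apply Measure.integrableOn_of_bounded hS'fin (humeas l).aestronglyMeasurable (M := n)
    refine ae_restrict_of_forall_mem hS'meas (fun x hx => ?_)
    have h1 : |u l x| ≤ g x := Finset.single_le_sum (f := fun l => |u l x|)
      (fun i _ => abs_nonneg _) (Finset.mem_univ l)
    exact h1.trans hx.2
  by_contra hcon
  push_neg at hcon
  have hcon' : ∀ B : Set ℝ, B ⊆ S' → MeasurableSet B → mvec u B ∈ W :=
    fun B hB hBm => hcon B (hB.trans hS'sub) hBm
  obtain ⟨φ, hφne, hφW⟩ :=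
    Submodule.exists_dual_map_eq_bot_of_lt_top (lt_top_iff_ne_top.2 hW) inferInstance
  have hφzero : ∀ w ∈ W, φ w = 0 := fun w hw => by
    have : φ w ∈ W.map φ := Submodule.mem_map_of_mem hw
    rwa [hφW, Submodule.mem_bot] at this
  set lam : Fin (N+1) → ℝ := fun j => φ (fun i => if j = i then 1 else 0) with hlamdef
  have hφeq : ∀ x, φ x = ∑ j, x j * lam j := by
    intro x
    rw [LinearMap.pi_apply_eq_sum_univ φ x]
    simp [hlamdef, smul_eq_mul]
  have hlamne : lam ≠ 0 := by
    intro h0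
    apply hφne
    apply LinearMap.ext
    intro x
    rw [hφeq x, h0]
    simp
  set f : ℝ → ℝ := fun x => lam 0 + ∑ l, lam (Fin.succ l) * u l x with hfdef
  have hfmeas : Measurable f := by
    apply Measurable.add measurable_const
    exact Finset.measurable_sum _ (fun l _ => (humeas l).const_mul _)
  have hfint : IntegrableOn f S' := by
    apply Integrable.add (integrableOn_const hS'fin)
    exact integrable_finset_sum _ (fun l _ => (hint l).const_mul _)
  have hfzero : ∀ B : Set ℝ, B ⊆ S' → MeasurableSet B → ∫ x in B, f x = 0 := by
    intro B hB hBm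
    have hw := hφzero _ (hcon' B hB hBm)
    rw [hφeq, Fin.sum_univ_succ] at hw
    simp only [mvec, Fin.cons_zero, Fin.cons_succ] at hw
    have hintB : ∀ l, IntegrableOn (u l) B := fun l => (hint l).mono_set hB
    have hcalc : ∫ x in B, f x
        = (volume B).toReal * lam 0 + ∑ l, (∫ x in B, u l x) * lam (Fin.succ l) := by
      rw [hfdef, integral_add
          (integrableOn_const (C := lam 0) (lt_of_le_of_lt (measure_mono hB) hS'fin.lt_top).ne)
          (integrable_finset_sum _ (fun l _ => (hintB l).const_mul _)),
        setIntegral_const, integral_finset_sum _ (fun l _ => (hintB l).const_mul _)]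
      simp only [smul_eq_mul]
      congr 1
      exact Finset.sum_congr rfl fun l _ => by rw [integral_const_mul]; ring
    rw [hcalc]
    exact hw
  -- conclude f = 0 a.e. on S'
  have hae : f =ᵐ[volume.restrict S'] 0 := by
    apply ae_eq_zero_of_forall_setIntegral_eq_of_sigmaFinite
    · intro s hs _
      rw [IntegrableOn, Measure.restrict_restrict hs]
      exact hfint.mono_set inter_subset_right
    · intro s hs _
      rw [Measure.restrict_restrict hs]
      exact hfzero _ inter_subset_right (hs.inter hS'meas)
  have hnull : volume ({x | f x ≠ 0} ∩ S') = 0 := by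
    have h := hae
    rw [Filter.EventuallyEq, ae_iff] at h
    simp only [Pi.zero_apply] at h
    have hm : MeasurableSet {a : ℝ | ¬ f a = 0} :=
      (measurableSet_eq_fun hfmeas measurable_const).compl
    rw [Measure.restrict_apply hm] at h
    exact h
  -- case split on lam restricted to succ indices
  by_cases hlt : (fun l : Fin N => lam (Fin.succ l)) = 0
  · -- then lam 0 ≠ 0 and f is a nonzero constant
    have hlam0 : lam 0 ≠ 0 := by
      intro h0
      apply hlamne
      funext j
      refine Fin.cases ?_ ?_ j
      · exact h0
      · intro l; exact congrFun hlt l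
    have hfx : ∀ x, f x ≠ 0 := by
      intro x
      rw [hfdef]
      simp only
      have : ∑ l, lam (Fin.succ l) * u l x = 0 := by
        refine Finset.sum_eq_zero (fun l _ => ?_)
        rw [congrFun hlt l]
        simp
      rw [this, add_zero]
      exact hlam0
    have : S' ⊆ {x | f x ≠ 0} ∩ S' := fun x hx => ⟨hfx x, hx⟩
    exact absurd (measure_mono_null this hnull) hn.ne'
  · -- use hindep
    have hZ := hindep (-(lam 0)) (fun l => lam (Fin.succ l)) hlt
    have hsub : S' ⊆ {x | f x ≠ 0} ∩ S' ∪ {x ∈ Icc (0:ℝ) X | ∑ j, lam (Fin.succ j) * u j x = -(lam 0)} := by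
      intro x hx
      by_cases hfx : f x = 0
      · right
        refine ⟨hSsub (hS'sub hx), ?_⟩
        have : lam 0 + ∑ l, lam (Fin.succ l) * u l x = 0 := hfx
        linarith [this]
      · left; exact ⟨hfx, hx⟩
    have : volume S' = 0 :=
      measure_mono_null hsub (measure_union_null hnull hZ)
    exact absurd this hn.ne'

lemma build {X : ℝ} {u : Fin N → ℝ → ℝ} (humeas : ∀ l, Measurable (u l))
    (hindep : ∀ (lam0 : ℝ) (lam : Fin N → ℝ), lam ≠ 0 →
      volume {x ∈ Icc (0:ℝ) X | ∑ j, lam j * u j x = lam0} = 0)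
    (Ap : Fin (N + 1) → Set ℝ) (hApmeas : ∀ i, MeasurableSet (Ap i))
    (hApsub : ∀ i, Ap i ⊆ Icc 0 X) (hAppos : ∀ i, 0 < volume (Ap i))
    (m : ℕ) (hm : m ≤ N + 1) :
    ∃ B : Fin m → Set ℝ,
      (∀ i, MeasurableSet (B i) ∧ B i ⊆ Ap (Fin.castLE hm i)) ∧
      LinearIndependent ℝ (fun i => mvec u (B i)) := by
  induction m with
  | zero => exact ⟨fun _ => ∅, fun i => i.elim0, linearIndependent_empty_type⟩
  | succ m ih =>
    obtain ⟨B, hB, hli⟩ := ih (Nat.le_of_succ_le hm)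
    have hWne : Submodule.span ℝ (Set.range fun i => mvec u (B i)) ≠ ⊤ := by
      intro htop
      have h1 : Module.finrank ℝ (Fin (N + 1) → ℝ) ≤ m :=
        le_trans (finrank_le_of_span_eq_top htop) (by simp)
      rw [Module.finrank_fin_fun] at h1
      omega
    obtain ⟨Bn, hBnsub, hBnmeas, hBnW⟩ := key humeas hindep
      (hApmeas (Fin.castLE hm (Fin.last m))) (hApsub _) (hAppos _) _ hWne
    refine ⟨Fin.snoc B Bn, ?_, ?_⟩
    · intro i
      refine Fin.lastCases ?_ (fun i => ?_) i
      · simp only [Fin.snoc_last]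
        exact ⟨hBnmeas, hBnsub⟩
      · simp only [Fin.snoc_castSucc]
        refine ⟨(hB i).1, ?_⟩
        have hcast : Fin.castLE hm (Fin.castSucc i) = Fin.castLE (Nat.le_of_succ_le hm) i := rfl
        rw [hcast]
        exact (hB i).2
    · have hsnoc : (fun i : Fin (m + 1) => mvec u ((Fin.snoc B Bn : Fin (m + 1) → Set ℝ) i))
          = Fin.snoc (fun i => mvec u (B i)) (mvec u Bn) := by
        funext i
        refine Fin.lastCases ?_ (fun i => ?_) i <;> simp
      rw [hsnoc]
      exact linearIndependent_fin_snoc.2 ⟨hli, hBnW⟩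

end Stmt19Aux

/-- Claims C2–C3: if the type utilities `u_1,…,u_N` are linearly
independent over sets of positive measure, then given a partition of a positive-measure
set `A ⊆ [0,X]` into `N+1` positive-measure pieces `A_1,…,A_{N+1}`, one can choose
`B_i ⊆ A_i` so that the `N+1` vectors
`ζ^0 = (ν(B_i))_i` and `ζ^l = (∫_{B_i} u_l)_i`, `l = 1,…,N`, are linearly independent;
in particular, for each `k` there is a unit vector `e` with `ζ^k · e > 0` and
`ζ^i · e = 0` for all `i ≠ k`. -/
theorem stmt19 (X : ℝ) (hX : 0 < X) (N : ℕ)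
    (u : Fin N → ℝ → ℝ) (humeas : ∀ l, Measurable (u l))
    (hindep : ∀ (lam0 : ℝ) (lam : Fin N → ℝ), lam ≠ 0 →
      volume {x ∈ Icc (0:ℝ) X | ∑ j, lam j * u j x = lam0} = 0)
    (A : Set ℝ) (hA : MeasurableSet A) (hAsub : A ⊆ Icc 0 X) (hApos : 0 < volume A)
    (Ap : Fin (N + 1) → Set ℝ) (hApmeas : ∀ i, MeasurableSet (Ap i))
    (hAppos : ∀ i, 0 < volume (Ap i))
    (hApdisj : Pairwise (Function.onFun Disjoint Ap))
    (hApcover : (⋃ i, Ap i) = A) :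
    ∃ B : Fin (N + 1) → Set ℝ,
      (∀ i, MeasurableSet (B i) ∧ B i ⊆ Ap i) ∧
      LinearIndependent ℝ
        (Fin.cons (fun i => (volume (B i)).toReal)
          (fun l i => ∫ x in B i, u l x) : Fin (N + 1) → (Fin (N + 1) → ℝ)) ∧
      (∀ k : Fin N, ∃ e : Fin (N + 1) → ℝ,
        (∑ i, e i ^ 2 = 1) ∧
        (0 < ∑ i, (∫ x in B i, u k x) * e i) ∧
        (∑ i, (volume (B i)).toReal * e i = 0) ∧
        (∀ l : Fin N, l ≠ k → ∑ i, (∫ x in B i, u l x) * e i = 0)) := by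
  classical
  have hApsub : ∀ i, Ap i ⊆ Icc (0:ℝ) X := by
    intro i
    refine subset_trans ?_ hAsub
    rw [← hApcover]
    exact subset_iUnion Ap i
  obtain ⟨B, hB, hli⟩ := Stmt19Aux.build humeas hindep Ap hApmeas hApsub hAppos (N + 1) le_rfl
  have hBsub : ∀ i, MeasurableSet (B i) ∧ B i ⊆ Ap i := by
    intro i
    have : Fin.castLE (le_refl (N + 1)) i = i := rfl
    simpa [this] using hB i
  set M : Matrix (Fin (N + 1)) (Fin (N + 1)) ℝ :=
    Matrix.of (fun j i => Stmt19Aux.mvec u (B i) j) with hMdef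
  have hM0 : ∀ i, M 0 i = (volume (B i)).toReal := fun i => rfl
  have hMsucc : ∀ (l : Fin N) i, M (Fin.succ l) i = ∫ x in B i, u l x := by
    intro l i
    simp [hMdef, Stmt19Aux.mvec]
  have hMunit : IsUnit M := Matrix.linearIndependent_cols_iff_isUnit.mp hli
  have hdet : IsUnit M.det := (Matrix.isUnit_iff_isUnit_det M).mp hMunit
  have hrows : LinearIndependent ℝ (fun j => M j) :=
    Matrix.linearIndependent_rows_iff_isUnit.mpr hMunit
  have hGM : (Fin.cons (fun i => (volume (B i)).toReal)
        (fun l i => ∫ x in B i, u l x) : Fin (N + 1) → (Fin (N + 1) → ℝ))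
      = fun j => M j := by
    funext j
    refine Fin.cases ?_ (fun l => ?_) j
    · funext i
      rw [Fin.cons_zero]
      exact (hM0 i).symm
    · funext i
      rw [Fin.cons_succ]
      exact (hMsucc l i).symm
  refine ⟨B, hBsub, by rw [hGM]; exact hrows, ?_⟩
  intro k
  set c : Fin (N + 1) → ℝ := M⁻¹.mulVec (Pi.single (Fin.succ k) 1) with hcdef
  have hMc : M.mulVec c = Pi.single (Fin.succ k) 1 := by
    rw [hcdef, Matrix.mulVec_mulVec, Matrix.mul_nonsing_inv M hdet, Matrix.one_mulVec]
  have hrowsum : ∀ j, ∑ i, M j i * c i = (Pi.single (Fin.succ k) 1 : Fin (N + 1) → ℝ) j := by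
    intro j
    have := congrFun hMc j
    simpa [Matrix.mulVec, dotProduct] using this
  have hc0 : c ≠ 0 := by
    intro h0
    have h1 := congrFun hMc (Fin.succ k)
    rw [h0, Matrix.mulVec_zero] at h1
    simp [Pi.single_eq_same] at h1
  obtain ⟨i0, hi0⟩ := Function.ne_iff.1 hc0
  have hi0' : c i0 ≠ 0 := by simpa using hi0
  set s : ℝ := ∑ i, c i ^ 2 with hsdef
  have hs : 0 < s := by
    have h1 : 0 < c i0 ^ 2 := by positivity
    exact lt_of_lt_of_le h1
      (Finset.single_le_sum (fun i _ => sq_nonneg (c i)) (Finset.mem_univ i0))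
  have hsq : 0 < Real.sqrt s := Real.sqrt_pos.2 hs
  refine ⟨fun i => (Real.sqrt s)⁻¹ * c i, ?_, ?_, ?_, ?_⟩
  · simp_rw [mul_pow, ← Finset.mul_sum]
    rw [← hsdef, inv_pow, Real.sq_sqrt hs.le, inv_mul_cancel₀ hs.ne']
  · have h2 : ∑ i, (∫ x in B i, u k x) * ((Real.sqrt s)⁻¹ * c i)
        = (Real.sqrt s)⁻¹ * ∑ i, M (Fin.succ k) i * c i := by
      rw [Finset.mul_sum]
      exact Finset.sum_congr rfl fun i _ => by rw [hMsucc k i]; ring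
    rw [h2, hrowsum, Pi.single_eq_same, mul_one]
    exact inv_pos.2 hsq
  · have h2 : ∑ i, (volume (B i)).toReal * ((Real.sqrt s)⁻¹ * c i)
        = (Real.sqrt s)⁻¹ * ∑ i, M 0 i * c i := by
      rw [Finset.mul_sum]
      exact Finset.sum_congr rfl fun i _ => by rw [hM0 i]; ring
    rw [h2, hrowsum, Pi.single_eq_of_ne (Fin.succ_ne_zero k).symm, mul_zero]
  · intro l hl
    have h2 : ∑ i, (∫ x in B i, u l x) * ((Real.sqrt s)⁻¹ * c i)
        = (Real.sqrt s)⁻¹ * ∑ i, M (Fin.succ l) i * c i := by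
      rw [Finset.mul_sum]
      exact Finset.sum_congr rfl fun i _ => by rw [hMsucc l i]; ring
    have hne : Fin.succ l ≠ Fin.succ k := fun h => hl (Fin.succ_injective _ h)
    rw [h2, hrowsum, Pi.single_eq_of_ne hne, mul_zero]
end
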